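/- Every root-to-leaf path in the cotree T* (rooted at h∞*) contains at most one arc penetrating Vor*(v) at C*_0, and contains no arc exiting Vor*(v) at C*_0. -/

import Mathlib

set_option linter.unusedSectionVars false
set_option linter.unusedVariables false
set_option linter.deprecated false

open scoped Classical

namespace VorAux

open Relation

variable {α : Type} [Fintype α] [DecidableEq α]

/-- number of classes of the equivalence generated by `r` -/
noncomputable def relCount (r : α → α → Prop) : ℕ :=
  Nat.card (Quotient (EqvGen.setoid r))

lemma eqvGen_lift {r p : α → α → Prop} (h : ∀ a b, r a b → EqvGen p a b)
    {a b : α} (hab : EqvGen r a b) : EqvGen p a b := by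
  have h2 := EqvGen.mono h a b hab
  rwa [Equivalence.eqvGen_eq (EqvGen.is_equivalence p)] at h2

noncomputable def qmap (r p : α → α → Prop) (h : ∀ a b, r a b → EqvGen p a b) :
    Quotient (EqvGen.setoid r) → Quotient (EqvGen.setoid p) :=
  Quotient.lift (fun a => Quotient.mk (EqvGen.setoid p) a)
    (fun a b hab => Quotient.sound (eqvGen_lift h hab))

lemma qmap_surj (r p : α → α → Prop) (h : ∀ a b, r a b → EqvGen p a b) :
    Function.Surjective (qmap r p h) := by
  intro q
  induction q using Quotient.ind with
  | _ a => exact ⟨Quotient.mk _ a, rfl⟩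

lemma relCount_le {r p : α → α → Prop} (h : ∀ a b, r a b → EqvGen p a b) :
    relCount p ≤ relCount r :=
  Nat.card_le_card_of_surjective (qmap r p h) (qmap_surj r p h)

lemma relCount_eq_of_iff {r p : α → α → Prop} (h1 : ∀ a b, r a b → EqvGen p a b)
    (h2 : ∀ a b, p a b → EqvGen r a b) : relCount r = relCount p :=
  le_antisymm (relCount_le h2) (relCount_le h1)

lemma relCount_le_card (r : α → α → Prop) : relCount r ≤ Fintype.card α := by
  rw [← Nat.card_eq_fintype_card]
  exact Nat.card_le_card_of_surjective _ Quotient.mk_surjective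

/-- `r` together with the extra pair `(x, y)` -/
def unionPair (r : α → α → Prop) (x y : α) : α → α → Prop :=
  fun u v => r u v ∨ (u = x ∧ v = y)

lemma char_union_pair (r : α → α → Prop) (x y a b : α) :
    EqvGen (unionPair r x y) a b ↔
      EqvGen r a b ∨ (EqvGen r a x ∧ EqvGen r y b) ∨ (EqvGen r a y ∧ EqvGen r x b) := by
  constructor
  · intro h
    induction h with
    | rel u v huv =>
      rcases huv with huv | ⟨rfl, rfl⟩
      · exact Or.inl (EqvGen.rel _ _ huv)
      · exact Or.inr (Or.inl ⟨EqvGen.refl _, EqvGen.refl _⟩)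
    | refl u => exact Or.inl (EqvGen.refl _)
    | symm u v h ih =>
      rcases ih with h1 | ⟨h1, h2⟩ | ⟨h1, h2⟩
      · exact Or.inl (EqvGen.symm _ _ h1)
      · exact Or.inr (Or.inr ⟨EqvGen.symm _ _ h2, EqvGen.symm _ _ h1⟩)
      · exact Or.inr (Or.inl ⟨EqvGen.symm _ _ h2, EqvGen.symm _ _ h1⟩)
    | trans u v w huv hvw ih1 ih2 =>
      rcases ih1 with h1 | ⟨h1, h2⟩ | ⟨h1, h2⟩
      · rcases ih2 with h3 | ⟨h3, h4⟩ | ⟨h3, h4⟩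
        · exact Or.inl (EqvGen.trans _ _ _ h1 h3)
        · exact Or.inr (Or.inl ⟨EqvGen.trans _ _ _ h1 h3, h4⟩)
        · exact Or.inr (Or.inr ⟨EqvGen.trans _ _ _ h1 h3, h4⟩)
      · rcases ih2 with h3 | ⟨h3, h4⟩ | ⟨h3, h4⟩
        · exact Or.inr (Or.inl ⟨h1, EqvGen.trans _ _ _ h2 h3⟩)
        · exact Or.inr (Or.inl ⟨h1, h4⟩)
        · exact Or.inl (EqvGen.trans _ _ _ h1 h4)
      · rcases ih2 with h3 | ⟨h3, h4⟩ | ⟨h3, h4⟩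
        · exact Or.inr (Or.inr ⟨h1, EqvGen.trans _ _ _ h2 h3⟩)
        · exact Or.inl (EqvGen.trans _ _ _ h1 h4)
        · exact Or.inr (Or.inr ⟨h1, h4⟩)
  · have hincl : ∀ u v : α, EqvGen r u v → EqvGen (unionPair r x y) u v :=
      fun u v h => eqvGen_lift (fun a b hab => EqvGen.rel _ _ (Or.inl hab)) h
    have hpair : EqvGen (unionPair r x y) x y := EqvGen.rel _ _ (Or.inr ⟨rfl, rfl⟩)
    rintro (h | ⟨h1, h2⟩ | ⟨h1, h2⟩)
    · exact hincl _ _ h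
    · exact EqvGen.trans _ _ _ (EqvGen.trans _ _ _ (hincl _ _ h1) hpair) (hincl _ _ h2)
    · exact EqvGen.trans _ _ _ (EqvGen.trans _ _ _ (hincl _ _ h1)
        (EqvGen.symm _ _ hpair)) (hincl _ _ h2)

noncomputable def pairMap (r : α → α → Prop) (x y : α) :
    Quotient (EqvGen.setoid r) → Quotient (EqvGen.setoid (unionPair r x y)) ⊕ Unit :=
  Quotient.lift
    (fun z => if EqvGen r z y then Sum.inr () else
      Sum.inl (Quotient.mk (EqvGen.setoid (unionPair r x y)) z))
    (by
      intro a b hab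
      have hab' : EqvGen r a b := hab
      by_cases h : EqvGen r a y
      · have h2 : EqvGen r b y := EqvGen.trans _ _ _ (EqvGen.symm _ _ hab') h
        simp [h, h2]
      · have h2 : ¬ EqvGen r b y := fun hb => h (EqvGen.trans _ _ _ hab' hb)
        simp only [h, h2, if_false]
        exact congrArg Sum.inl (Quotient.sound
          (eqvGen_lift (fun u v huv => EqvGen.rel _ _ (Or.inl huv)) hab')))

lemma pairMap_injective (r : α → α → Prop) (x y : α) :
    Function.Injective (pairMap r x y) := by
  intro q1 q2
  induction q1 using Quotient.ind with
  | _ z =>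
  induction q2 using Quotient.ind with
  | _ w =>
  intro h
  by_cases hz : EqvGen r z y <;> by_cases hw : EqvGen r w y <;>
    simp only [pairMap, Quotient.lift_mk, hz, hw, if_true, if_false] at h
  · exact Quotient.sound (EqvGen.trans _ _ _ hz (EqvGen.symm _ _ hw))
  · exact absurd h (by simp)
  · exact absurd h (by simp)
  · have h2 := Quotient.exact (Sum.inl.inj h)
    have h3 : EqvGen (unionPair r x y) z w := h2
    rcases (char_union_pair r x y z w).1 h3 with h4 | ⟨h4, h5⟩ | ⟨h4, h5⟩
    · exact Quotient.sound h4
    · exact absurd (EqvGen.trans _ _ _ (EqvGen.symm _ _ h5) (EqvGen.refl y)) hw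
    · exact absurd h4 hz

lemma relCount_le_union_pair (r : α → α → Prop) (x y : α) :
    relCount r ≤ relCount (unionPair r x y) + 1 := by
  have h := Nat.card_le_card_of_injective _ (pairMap_injective r x y)
  have hu : Nat.card Unit = 1 := Nat.card_unique
  rwa [Nat.card_sum, hu] at h

lemma relCount_eq_union_pair (r : α → α → Prop) (x y : α) (hxy : ¬ EqvGen r x y) :
    relCount r = relCount (unionPair r x y) + 1 := by
  have hsurj : Function.Surjective (pairMap r x y) := by
    rintro (q | u)
    · induction q using Quotient.ind with
      | _ w =>
        by_cases hw : EqvGen r w y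
        · refine ⟨Quotient.mk _ x, ?_⟩
          have hx : ¬ EqvGen r x y := hxy
          simp only [pairMap, Quotient.lift_mk, hx, if_false]
          refine congrArg Sum.inl (Quotient.sound ?_)
          have hpair : EqvGen (unionPair r x y) x y := EqvGen.rel _ _ (Or.inr ⟨rfl, rfl⟩)
          have hyw : EqvGen (unionPair r x y) y w :=
            eqvGen_lift (fun u v huv => EqvGen.rel _ _ (Or.inl huv)) (EqvGen.symm _ _ hw)
          exact EqvGen.trans _ _ _ hpair hyw
        · exact ⟨Quotient.mk _ w, by simp only [pairMap, Quotient.lift_mk, hw, if_false]⟩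
    · refine ⟨Quotient.mk _ y, ?_⟩
      have : EqvGen r y y := EqvGen.refl y
      simp only [pairMap, Quotient.lift_mk, this, if_true]
  have h := Nat.card_eq_of_bijective _ ⟨pairMap_injective r x y, hsurj⟩
  have hu : Nat.card Unit = 1 := Nat.card_unique
  rwa [Nat.card_sum, hu] at h


/-! ### Permutation orbit counts -/

def pstep (σ : Equiv.Perm α) : α → α → Prop := fun a b => σ a = b

noncomputable def orbCount (σ : Equiv.Perm α) : ℕ := relCount (pstep σ)

lemma pstep_iterate (σ : Equiv.Perm α) (a : α) (n : ℕ) :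
    EqvGen (pstep σ) a ((⇑σ)^[n] a) := by
  induction n with
  | zero => exact EqvGen.refl a
  | succ n ih =>
    rw [Function.iterate_succ_apply']
    exact EqvGen.trans _ _ _ ih (EqvGen.rel _ _ rfl)

lemma eqvGen_pstep_iff {σ : Equiv.Perm α} {a b : α} :
    EqvGen (pstep σ) a b ↔ ∃ n : ℕ, (⇑σ)^[n] a = b := by
  constructor
  · intro h
    induction h with
    | rel u v huv => exact ⟨1, by simpa [pstep] using huv⟩
    | refl u => exact ⟨0, rfl⟩
    | symm u v h ih =>
      obtain ⟨n, hn⟩ := ih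
      refine ⟨n * (orderOf σ - 1), ?_⟩
      have h1 : (⇑σ)^[n * (orderOf σ - 1)] ((⇑σ)^[n] u) = (⇑σ)^[n * (orderOf σ - 1) + n] u := by
        rw [← Function.iterate_add_apply]
      have h2 : n * (orderOf σ - 1) + n = orderOf σ * n := by
        have hpos : 1 ≤ orderOf σ := orderOf_pos σ
        cases' Nat.exists_eq_add_of_le hpos with k hk
        rw [hk]
        have hk1 : 1 + k - 1 = k := by omega
        rw [hk1]; ring
      have h3 : (⇑σ)^[orderOf σ * n] u = u := by
        rw [Equiv.Perm.iterate_eq_pow, pow_mul, pow_orderOf_eq_one, one_pow]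
        rfl
      rw [← hn, h1, h2, h3]
    | trans u v w h1 h2 ih1 ih2 =>
      obtain ⟨n, hn⟩ := ih1
      obtain ⟨m, hm⟩ := ih2
      exact ⟨m + n, by rw [Function.iterate_add_apply, hn, hm]⟩
  · rintro ⟨n, rfl⟩
    exact pstep_iterate σ a n

lemma eqvGen_pstep_fixed {σ : Equiv.Perm α} {y : α} (hy : σ y = y) {z : α}
    (h : EqvGen (pstep σ) y z) : z = y := by
  obtain ⟨n, hn⟩ := eqvGen_pstep_iff.1 h
  have : ∀ m : ℕ, (⇑σ)^[m] y = y := by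
    intro m
    induction m with
    | zero => rfl
    | succ m ih => rw [Function.iterate_succ_apply', ih, hy]
  rw [this n] at hn
  exact hn.symm

lemma orbCount_le_card (σ : Equiv.Perm α) : orbCount σ ≤ Fintype.card α :=
  relCount_le_card _

/-- splicing a point out of a cycle increases the orbit count by one -/
lemma orbCount_mul_swap_apply (σ : Equiv.Perm α) (x : α) (hx : σ x ≠ x) :
    orbCount (σ * Equiv.swap x (σ x)) = orbCount σ + 1 := by
  set y := σ x with hy
  set τ' := σ * Equiv.swap x y with hτ'
  have hvx : τ' x = σ y := by
    rw [hτ', Equiv.Perm.mul_apply, Equiv.swap_apply_left]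
  have hvy : τ' y = y := by
    rw [hτ', Equiv.Perm.mul_apply, Equiv.swap_apply_right, hy]
  have hvz : ∀ z, z ≠ x → z ≠ y → τ' z = σ z := by
    intro z h1 h2
    rw [hτ', Equiv.Perm.mul_apply, Equiv.swap_apply_of_ne_of_ne h1 h2]
  have hxy : x ≠ y := fun h => hx h.symm
  have h1 : ∀ a b, pstep τ' a b → EqvGen (pstep σ) a b := by
    intro a b hab
    by_cases ha1 : a = x
    · subst ha1
      rw [← hab, hvx]
      exact EqvGen.trans _ _ _ (EqvGen.rel _ _ rfl) (EqvGen.rel _ _ rfl)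
    · by_cases ha2 : a = y
      · subst ha2
        rw [← hab, hvy]
        exact EqvGen.refl _
      · rw [← hab, hvz a ha1 ha2]
        exact EqvGen.rel _ _ rfl
  have h2 : ∀ a b, pstep σ a b → EqvGen (unionPair (pstep τ') x y) a b := by
    intro a b hab
    by_cases ha1 : a = x
    · subst ha1
      rw [← hab, ← hy]
      exact EqvGen.rel _ _ (Or.inr ⟨rfl, rfl⟩)
    · by_cases ha2 : a = y
      · subst ha2
        have : σ y = τ' x := hvx.symm
        rw [← hab, this]
        exact EqvGen.trans _ _ _ (EqvGen.symm _ _ (EqvGen.rel _ _ (Or.inr ⟨rfl, rfl⟩)))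
          (EqvGen.rel _ _ (Or.inl rfl))
      · rw [← hab, ← hvz a ha1 ha2]
        exact EqvGen.rel _ _ (Or.inl rfl)
  have hcount : relCount (unionPair (pstep τ') x y) = relCount (pstep σ) := by
    apply relCount_eq_of_iff
    · intro a b hab
      rcases hab with hab | ⟨rfl, rfl⟩
      · exact h1 a b hab
      · exact EqvGen.rel _ _ rfl
    · exact h2
  have hns : ¬ EqvGen (pstep τ') x y := by
    intro h
    have h2 := eqvGen_pstep_fixed hvy (EqvGen.symm _ _ h)
    exact hxy h2
  have hq3 := relCount_eq_union_pair (pstep τ') x y hns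
  show relCount (pstep τ') = relCount (pstep σ) + 1
  rw [hq3, hcount]

lemma relCount_union_pair_swap (ρ : Equiv.Perm α) (x y : α) :
    relCount (unionPair (pstep ρ) x y)
      = relCount (unionPair (pstep (ρ * Equiv.swap x y)) x y) := by
  set ρt := ρ * Equiv.swap x y with hρt
  have hvx : ρt x = ρ y := by rw [hρt, Equiv.Perm.mul_apply, Equiv.swap_apply_left]
  have hvy : ρt y = ρ x := by rw [hρt, Equiv.Perm.mul_apply, Equiv.swap_apply_right]
  have hvz : ∀ z, z ≠ x → z ≠ y → ρt z = ρ z := by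
    intro z h1 h2
    rw [hρt, Equiv.Perm.mul_apply, Equiv.swap_apply_of_ne_of_ne h1 h2]
  have hpair1 : EqvGen (unionPair (pstep ρt) x y) x y := EqvGen.rel _ _ (Or.inr ⟨rfl, rfl⟩)
  have hpair2 : EqvGen (unionPair (pstep ρ) x y) x y := EqvGen.rel _ _ (Or.inr ⟨rfl, rfl⟩)
  apply relCount_eq_of_iff
  · intro a b hab
    rcases hab with hab | ⟨rfl, rfl⟩
    · by_cases ha1 : a = x
      · subst ha1
        rw [← hab, ← hvy]
        exact EqvGen.trans _ _ _ hpair1 (EqvGen.rel _ _ (Or.inl rfl))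
      · by_cases ha2 : a = y
        · subst ha2
          rw [← hab, ← hvx]
          exact EqvGen.trans _ _ _ (EqvGen.symm _ _ hpair1) (EqvGen.rel _ _ (Or.inl rfl))
        · rw [← hab, ← hvz a ha1 ha2]
          exact EqvGen.rel _ _ (Or.inl rfl)
    · exact hpair1
  · intro a b hab
    rcases hab with hab | ⟨rfl, rfl⟩
    · by_cases ha1 : a = x
      · subst ha1
        rw [← hab, hvx]
        exact EqvGen.trans _ _ _ hpair2 (EqvGen.rel _ _ (Or.inl rfl))
      · by_cases ha2 : a = y
        · subst ha2
          rw [← hab, hvy]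
          exact EqvGen.trans _ _ _ (EqvGen.symm _ _ hpair2) (EqvGen.rel _ _ (Or.inl rfl))
        · rw [← hab, hvz a ha1 ha2]
          exact EqvGen.rel _ _ (Or.inl rfl)
    · exact hpair2


/-- merging two cycles with a swap decreases the orbit count by one -/
lemma orbCount_merge (ρ : Equiv.Perm α) (x y : α) (hxy : x ≠ y)
    (h : ¬ EqvGen (pstep ρ) x y) :
    orbCount ρ = orbCount (ρ * Equiv.swap x y) + 1 := by
  set ρt := ρ * Equiv.swap x y with hρt
  have hvx : ρt x = ρ y := by rw [hρt, Equiv.Perm.mul_apply, Equiv.swap_apply_left]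
  have hvy : ρt y = ρ x := by rw [hρt, Equiv.Perm.mul_apply, Equiv.swap_apply_right]
  have hvz : ∀ z, z ≠ x → z ≠ y → ρt z = ρ z := by
    intro z h1 h2
    rw [hρt, Equiv.Perm.mul_apply, Equiv.swap_apply_of_ne_of_ne h1 h2]
  -- ρt relates y and x
  have hit : EqvGen (pstep ρt) x y := by
    have hne : ∃ m : ℕ, (⇑ρ)^[m + 1] x = x := by
      refine ⟨orderOf ρ - 1, ?_⟩
      have hpos : 1 ≤ orderOf ρ := orderOf_pos ρ
      have : orderOf ρ - 1 + 1 = orderOf ρ := by omega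
      rw [this, Equiv.Perm.iterate_eq_pow, pow_orderOf_eq_one]
      rfl
    set k := Nat.find hne with hk
    have hspec : (⇑ρ)^[k + 1] x = x := Nat.find_spec hne
    have hmin : ∀ j, j < k → (⇑ρ)^[j + 1] x ≠ x := fun j hj => Nat.find_min hne hj
    have hnoty : ∀ j : ℕ, (⇑ρ)^[j] x ≠ y := by
      intro j hj
      exact h (hj ▸ pstep_iterate ρ x j)
    have haux : ∀ j, j ≤ k → (⇑ρt)^[j + 1] y = (⇑ρ)^[j + 1] x := by
      intro j
      induction j with
      | zero =>
        intro _
        simpa using hvy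
      | succ j ih =>
        intro hj
        have hjk : j < k := by omega
        have h1 : (⇑ρt)^[j + 1 + 1] y = ρt ((⇑ρ)^[j + 1] x) := by
          rw [Function.iterate_succ_apply', ih (by omega)]
        rw [h1, hvz _ (hmin j hjk) (hnoty (j + 1))]
        exact (Function.iterate_succ_apply' _ _ _).symm
    have hfin : (⇑ρt)^[k + 1] y = x := by rw [haux k le_rfl, hspec]
    exact EqvGen.symm _ _ (eqvGen_pstep_iff.2 ⟨k + 1, hfin⟩)
  have habsorb : relCount (unionPair (pstep ρt) x y) = relCount (pstep ρt) := by
    apply relCount_eq_of_iff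
    · intro a b hab
      rcases hab with hab | ⟨rfl, rfl⟩
      · exact EqvGen.rel _ _ hab
      · exact hit
    · intro a b hab
      exact EqvGen.rel _ _ (Or.inl hab)
  have hq3 := relCount_eq_union_pair (pstep ρ) x y h
  show relCount (pstep ρ) = relCount (pstep ρt) + 1
  rw [hq3, relCount_union_pair_swap ρ x y, ← hρt, habsorb]

lemma orbCount_mul_swap_le (ρ : Equiv.Perm α) (x y : α) :
    orbCount (ρ * Equiv.swap x y) ≤ orbCount ρ + 1 := by
  have h1 : relCount (pstep (ρ * Equiv.swap x y))
      ≤ relCount (unionPair (pstep (ρ * Equiv.swap x y)) x y) + 1 :=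
    relCount_le_union_pair _ x y
  have h2 : relCount (unionPair (pstep ρ) x y) ≤ relCount (pstep ρ) :=
    relCount_le (fun a b hab => EqvGen.rel _ _ (Or.inl hab))
  calc orbCount (ρ * Equiv.swap x y) ≤ relCount (unionPair (pstep (ρ * Equiv.swap x y)) x y) + 1 := h1
    _ = relCount (unionPair (pstep ρ) x y) + 1 := by rw [relCount_union_pair_swap ρ x y]
    _ ≤ orbCount ρ + 1 := by exact Nat.add_le_add_right h2 1

/-! ### joint components -/

def jstep (σ τ : Equiv.Perm α) : α → α → Prop := fun a b => σ a = b ∨ τ a = b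

noncomputable def compCount (σ τ : Equiv.Perm α) : ℕ := relCount (jstep σ τ)

lemma orbCount_one : orbCount (1 : Equiv.Perm α) = Fintype.card α := by
  rw [orbCount, relCount, ← Nat.card_eq_fintype_card]
  symm
  apply Nat.card_eq_of_bijective (fun a => Quotient.mk (EqvGen.setoid (pstep (1 : Equiv.Perm α))) a)
  constructor
  · intro a b hab
    have h2 : EqvGen (pstep (1 : Equiv.Perm α)) a b := Quotient.exact hab
    obtain ⟨n, hn⟩ := eqvGen_pstep_iff.1 h2
    have hid : ∀ m : ℕ, (⇑(1 : Equiv.Perm α))^[m] a = a := by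
      intro m
      induction m with
      | zero => rfl
      | succ m ih => rw [Function.iterate_succ_apply', ih]; rfl
    rw [hid n] at hn
    exact hn
  · exact Quotient.mk_surjective

lemma orbCount_eq_card_eq_one (τ : Equiv.Perm α) (h : Fintype.card α ≤ orbCount τ) : τ = 1 := by
  have hle : orbCount τ ≤ Fintype.card α := orbCount_le_card τ
  have heq : orbCount τ = Fintype.card α := le_antisymm hle h
  have hbij : Function.Bijective
      (fun a => Quotient.mk (EqvGen.setoid (pstep τ)) a) := by
    rw [Nat.bijective_iff_surjective_and_card]
    exact ⟨Quotient.mk_surjective, by rw [Nat.card_eq_fintype_card, ← heq]; rfl⟩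
  ext a
  have : Quotient.mk (EqvGen.setoid (pstep τ)) (τ a) = Quotient.mk (EqvGen.setoid (pstep τ)) a :=
    (Quotient.sound (EqvGen.symm _ _ (EqvGen.rel _ _ rfl)))
  have h2 := hbij.1 this
  simpa using h2

lemma compCount_one (σ : Equiv.Perm α) : compCount σ 1 = orbCount σ := by
  apply relCount_eq_of_iff
  · intro a b hab
    rcases hab with hab | hab
    · exact EqvGen.rel _ _ hab
    · have : a = b := by simpa using hab
      exact this ▸ EqvGen.refl a
  · intro a b hab
    exact EqvGen.rel _ _ (Or.inl hab)

lemma genus_id (σ : Equiv.Perm α) :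
    orbCount σ + orbCount (1 : Equiv.Perm α) + orbCount (σ * 1)
      ≤ Fintype.card α + 2 * compCount σ 1 := by
  rw [mul_one, orbCount_one, compCount_one]
  omega

lemma genus_aux : ∀ (n : ℕ) (σ τ : Equiv.Perm α), Fintype.card α ≤ orbCount τ + n →
    orbCount σ + orbCount τ + orbCount (σ * τ) ≤ Fintype.card α + 2 * compCount σ τ := by
  intro n
  induction n with
  | zero =>
    intro σ τ hcard
    have hτ : τ = 1 := orbCount_eq_card_eq_one τ (by omega)
    subst hτ
    exact genus_id σ
  | succ n ih =>
    intro σ τ hcard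
    by_cases hτ1 : τ = 1
    · subst hτ1; exact genus_id σ
    · obtain ⟨x, hx⟩ : ∃ x, τ x ≠ x := by
        by_contra hall
        push_neg at hall
        exact hτ1 (Equiv.ext hall)
      set y := τ x with hy
      have hxy : x ≠ y := fun hh => hx hh.symm
      set t := Equiv.swap x y with ht
      set τ' := τ * t with hτ'
      have hOτ' : orbCount τ' = orbCount τ + 1 := orbCount_mul_swap_apply τ x hx
      have hmeas : Fintype.card α ≤ orbCount τ' + n := by omega
      have IH := ih σ τ' hmeas
      have hkey : σ * τ = (σ * τ') * t := by
        rw [hτ', ht, mul_assoc, mul_assoc, Equiv.swap_mul_self, mul_one]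
      -- values of τ'
      have hvx' : τ' x = τ y := by rw [hτ', Equiv.Perm.mul_apply, ht, Equiv.swap_apply_left]
      have hvy' : τ' y = y := by
        rw [hτ', Equiv.Perm.mul_apply, ht, Equiv.swap_apply_right, hy]
      have hvz' : ∀ z, z ≠ x → z ≠ y → τ' z = τ z := by
        intro z h1 h2
        rw [hτ', Equiv.Perm.mul_apply, ht, Equiv.swap_apply_of_ne_of_ne h1 h2]
      -- relation between the joint components
      have hJ1 : relCount (unionPair (jstep σ τ') x y) = compCount σ τ := by
        apply relCount_eq_of_iff
        · intro a b hab
          rcases hab with (hab | hab) | ⟨rfl, rfl⟩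
          · exact EqvGen.rel _ _ (Or.inl hab)
          · by_cases ha1 : a = x
            · subst ha1
              rw [← hab, hvx']
              exact EqvGen.trans _ _ _ (EqvGen.rel _ _ (Or.inr rfl)) (EqvGen.rel _ _ (Or.inr rfl))
            · by_cases ha2 : a = y
              · subst ha2
                rw [← hab, hvy']
                exact EqvGen.refl _
              · rw [← hab, hvz' a ha1 ha2]
                exact EqvGen.rel _ _ (Or.inr rfl)
          · exact EqvGen.rel _ _ (Or.inr hy.symm)
        · intro a b hab
          rcases hab with hab | hab
          · exact EqvGen.rel _ _ (Or.inl (Or.inl hab))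
          · by_cases ha1 : a = x
            · subst ha1
              rw [← hab, ← hy]
              exact EqvGen.rel _ _ (Or.inr ⟨rfl, rfl⟩)
            · by_cases ha2 : a = y
              · subst ha2
                have hbt : τ y = τ' x := hvx'.symm
                rw [← hab, hbt]
                exact EqvGen.trans _ _ _ (EqvGen.symm _ _ (EqvGen.rel _ _ (Or.inr ⟨rfl, rfl⟩)))
                  (EqvGen.rel _ _ (Or.inl (Or.inr rfl)))
              · rw [← hab, ← hvz' a ha1 ha2]
                exact EqvGen.rel _ _ (Or.inl (Or.inr rfl))
      by_cases hcon : EqvGen (jstep σ τ') x y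
      · have hC : compCount σ τ' = compCount σ τ := by
          rw [← hJ1]
          apply relCount_eq_of_iff
          · intro a b hab
            exact EqvGen.rel _ _ (Or.inl hab)
          · intro a b hab
            rcases hab with hab | ⟨rfl, rfl⟩
            · exact EqvGen.rel _ _ hab
            · exact hcon
        have hOb : orbCount (σ * τ) ≤ orbCount (σ * τ') + 1 := by
          rw [hkey, ht]
          exact orbCount_mul_swap_le (σ * τ') x y
        omega
      · have hns : ¬ EqvGen (pstep (σ * τ')) x y := by
          intro hcc
          apply hcon
          refine eqvGen_lift (fun a b hab => ?_) hcc
          have : b = σ (τ' a) := by rw [← hab]; rfl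
          subst this
          exact EqvGen.trans _ _ _ (EqvGen.rel _ _ (Or.inr rfl)) (EqvGen.rel _ _ (Or.inl rfl))
        have hOm : orbCount (σ * τ') = orbCount (σ * τ) + 1 := by
          rw [hkey, ht]
          exact orbCount_merge (σ * τ') x y hxy hns
        have hC : compCount σ τ' = compCount σ τ + 1 := by
          have := relCount_eq_union_pair (jstep σ τ') x y hcon
          rw [compCount, this, hJ1]
        omega

/-- **Euler genus inequality for a pair of permutations.** -/
theorem genus_bound (σ τ : Equiv.Perm α)
    (htrans : ∀ a b : α, EqvGen (jstep σ τ) a b) :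
    orbCount σ + orbCount τ + orbCount (σ * τ) ≤ Fintype.card α + 2 := by
  have hcomp : compCount σ τ ≤ 1 := by
    have hinj : Function.Injective (fun _ : Quotient (EqvGen.setoid (jstep σ τ)) => ()) := by
      intro q q' _
      induction q using Quotient.ind with
      | _ a =>
      induction q' using Quotient.ind with
      | _ b => exact Quotient.sound (htrans a b)
    have h2 := Nat.card_le_card_of_injective _ hinj
    have hu : Nat.card Unit = 1 := Nat.card_unique
    rwa [hu] at h2
  have := genus_aux (Fintype.card α) σ τ (by omega)
  omega

end VorAux






/-- A finite connected directed planar embedded multigraph, presented by a rotation system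
(darts with reversal and a counterclockwise rotation around each vertex), together with its
faces and Euler's formula (which forces the embedding to be planar). Every arc has an
antiparallel reverse arc embedded on the same curve. -/
structure PlanarGraph where
  /-- vertices -/
  V : Type
  /-- arcs (darts) -/
  A : Type
  /-- faces -/
  F : Type
  fintypeV : Fintype V
  fintypeA : Fintype A
  fintypeF : Fintype F
  decV : DecidableEq V
  decA : DecidableEq A
  decF : DecidableEq F
  tail : A → V
  head : A → V
  /-- arc reversal -/
  rev : A → A
  rev_rev : ∀ a, rev (rev a) = a
  rev_ne : ∀ a, rev a ≠ a
  tail_rev : ∀ a, tail (rev a) = head a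
  /-- rotation: the next arc, counterclockwise, among the arcs with the same tail -/
  rot : Equiv.Perm A
  tail_rot : ∀ a, tail (rot a) = tail a
  /-- the face lying to the left of an arc -/
  left : A → F
  /-- along the boundary walk of a face, the arc following `a` is `rot (rev a)` -/
  left_faceNext : ∀ a, left (rot (rev a)) = left a
  /-- the boundary of each face is a single orbit of the face-walk -/
  face_orbit : ∀ a b, left a = left b → ∃ n : ℕ, (fun x => rot (rev x))^[n] a = b
  left_surjective : Function.Surjective left
  /-- the graph is connected -/
  connected : ∀ u w : V, Relation.ReflTransGen (fun x y => ∃ a, tail a = x ∧ head a = y) u w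
  /-- Euler's formula `|V| - |E| + |F| = 2` (where `|E| = |A|/2`): the embedding is planar -/
  euler : 2 * @Fintype.card V fintypeV + 2 * @Fintype.card F fintypeF
            = @Fintype.card A fintypeA + 4

attribute [instance] PlanarGraph.fintypeV PlanarGraph.fintypeA PlanarGraph.fintypeF
attribute [instance] PlanarGraph.decV PlanarGraph.decA PlanarGraph.decF

namespace PlanarGraph

variable (G : PlanarGraph)

/-- the face to the right of an arc -/
def right (a : G.A) : G.F := G.left (G.rev a)

/-- the tail of the dual arc `a*`: the face to the left of `a` -/
def dualTail (a : G.A) : G.F := G.left a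

/-- the head of the dual arc `a*`: the face to the right of `a` -/
def dualHead (a : G.A) : G.F := G.right a

/-- a vertex is incident to a face -/
def Incident (w : G.V) (f : G.F) : Prop := ∃ a, G.tail a = w ∧ G.left a = f

/-- the dual arc `a*` is incident to the dual vertex (face) `φ` -/
def DualIncident (a : G.A) (φ : G.F) : Prop := G.dualTail a = φ ∨ G.dualHead a = φ

/-- `IsWalk p u w`: the list of arcs `p` forms a walk from `u` to `w` in `G` -/
def IsWalk : List G.A → G.V → G.V → Prop
  | [], u, w => u = w
  | a :: p, u, w => G.tail a = u ∧ IsWalk p (G.head a) w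

/-- the vertices visited by a walk starting at `u` -/
def walkVertices (p : List G.A) (u : G.V) : List G.V := u :: p.map G.head

/-- `IsDualWalk s p φ ψ`: the arcs of `p` lie in `s` and their duals form a walk from the
face `φ` to the face `ψ` in the dual graph `P*` -/
def IsDualWalk (s : Set G.A) : List G.A → G.F → G.F → Prop
  | [], φ, ψ => φ = ψ
  | a :: p, φ, ψ => a ∈ s ∧ G.dualTail a = φ ∧ IsDualWalk s p (G.dualHead a) ψ

/-- the length of a walk with respect to the arc lengths `len` -/
def walkLen (len : G.A → ℝ) (p : List G.A) : ℝ := (p.map len).sum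

/-- `d` is the shortest-path distance of `G` with respect to the arc lengths `len` -/
def IsSPDist (len : G.A → ℝ) (d : G.V → G.V → ℝ) : Prop :=
  ∀ u w : G.V, (∃ p, G.IsWalk p u w ∧ G.walkLen len p = d u w) ∧
    ∀ p, G.IsWalk p u w → d u w ≤ G.walkLen len p

/-- there are no negative-length cycles -/
def NoNegCycle (len : G.A → ℝ) : Prop :=
  ∀ (u : G.V) (p : List G.A), G.IsWalk p u u → 0 ≤ G.walkLen len p

/-- shortest paths are unique -/
def UniqueShortestPaths (len : G.A → ℝ) (d : G.V → G.V → ℝ) : Prop :=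
  ∀ (u w : G.V) (p q : List G.A), G.IsWalk p u w → G.IsWalk q u w →
    G.walkLen len p = d u w → G.walkLen len q = d u w → p = q

/-- vertex-to-vertex distances are pairwise distinct -/
def GenericDistances (d : G.V → G.V → ℝ) : Prop :=
  ∀ u w u' w' : G.V, u ≠ w → u' ≠ w' → d u w = d u' w' → u = u' ∧ w = w'

/-- the additively weighted Voronoi cell of a site `u` among the sites `S`:
the vertices strictly closer (in additively weighted distance) to `u` than to
any other site of `S` -/
def VorCell (d : G.V → G.V → ℝ) (S : Set G.V) (ω : G.V → ℝ) (u : G.V) : Set G.V :=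
  {w | u ∈ S ∧ ∀ u' ∈ S, u' ≠ u → ω u + d u w < ω u' + d u' w}

/-- the bisector `β*(u,v)` (as a set of (duals of) arcs): duals of the arcs whose tail is
closer to `u` and whose head is closer to `v` in the two-site diagram `VD({u,v},ω)` -/
def bisector (d : G.V → G.V → ℝ) (u v : G.V) (ωu ωv : ℝ) : Set G.A :=
  {a | ωu + d u (G.tail a) < ωv + d v (G.tail a) ∧
       ωv + d v (G.head a) < ωu + d u (G.head a)}

/-- `s` is a simple cycle in the dual graph `P*` -/
def IsSimpleDualCycle (s : Set G.A) : Prop :=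
  s.Nonempty ∧
  Set.InjOn G.dualTail s ∧
  Set.InjOn G.dualHead s ∧
  (∀ a ∈ s, ∃ b ∈ s, G.dualTail b = G.dualHead a) ∧
  (∀ a ∈ s, ∃ b ∈ s, G.dualHead b = G.dualTail a) ∧
  ∀ a ∈ s, ∀ b ∈ s,
    Relation.ReflTransGen (fun x y => x ∈ s ∧ y ∈ s ∧ G.dualHead x = G.dualTail y) a b

/-- `t` is (the arc set of) a contiguous segment of the dual cycle `s` -/
def IsSegmentOf (t s : Set G.A) : Prop :=
  t ⊆ s ∧ ∃ (f : ℕ → G.A) (n : ℕ),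
    (∀ k < n, f k ∈ s) ∧
    (∀ k, k + 1 < n → G.dualHead (f k) = G.dualTail (f (k + 1))) ∧
    t = {a | ∃ k < n, f k = a}

/-- `f` enumerates the arc set `s` as a (simple) closed walk of length `n` in the dual graph -/
def IsCyclicEnum (s : Set G.A) (f : ℕ → G.A) (n : ℕ) : Prop :=
  0 < n ∧ (∀ k < n, f k ∈ s) ∧ (∀ a ∈ s, ∃ k < n, f k = a) ∧
  (∀ k l, k < n → l < n → f k = f l → k = l) ∧
  (∀ k, k + 1 < n → G.dualHead (f k) = G.dualTail (f (k + 1))) ∧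
  G.dualHead (f (n - 1)) = G.dualTail (f 0)

/-- all faces of `G` except the holes are triangles -/
def Triangulated (Holes : Set G.F) : Prop :=
  ∀ f, f ∉ Holes → Set.ncard {a : G.A | G.left a = f} = 3

/-- the cell of the site `s₁` in the additively weighted Voronoi diagram of the three
sites `s₁, s₂, s₃` with respective weights `w₁, w₂, w₃` -/
def cell3 (d : G.V → G.V → ℝ) (s₁ s₂ s₃ : G.V) (w₁ w₂ w₃ : ℝ) : Set G.V :=
  {w | w₁ + d s₁ w < w₂ + d s₂ w ∧ w₁ + d s₁ w < w₃ + d s₃ w}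

/-- `f` is a trichromatic face of `VD_x`, the Voronoi diagram of the sites `r, g, b` with
respective weights `x, ωg, ωb`: it is incident to a vertex of each of the three cells -/
def Trichromatic3 (d : G.V → G.V → ℝ) (r g b : G.V) (x ωg ωb : ℝ) (f : G.F) : Prop :=
  (∃ p ∈ G.cell3 d r g b x ωg ωb, G.Incident p f) ∧
  (∃ p ∈ G.cell3 d g r b ωg x ωb, G.Incident p f) ∧
  (∃ p ∈ G.cell3 d b r g ωb x ωg, G.Incident p f)

/-- `δ̃^{rc}(w) = ω(c) + d(c,w) - d(r,w)` and `Δ^r(w) = min (δ̃^{rg}(w)) (δ̃^{rb}(w))`: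
the largest weight that can be assigned to `r` so that `w` is in the cell of `r` -/
def DeltaVertex (d : G.V → G.V → ℝ) (r g b : G.V) (ωg ωb : ℝ) (w : G.V) : ℝ :=
  min (ωg + d g w - d r w) (ωb + d b w - d r w)

/-- `Δ^r` of an arc: the maximum of `Δ^r` over its two endpoints (also the value
attached to the dual arc) -/
def DeltaArc (d : G.V → G.V → ℝ) (r g b : G.V) (ωg ωb : ℝ) (a : G.A) : ℝ :=
  max (G.DeltaVertex d r g b ωg ωb (G.tail a)) (G.DeltaVertex d r g b ωg ωb (G.head a))

/-- `T` is (the arc set of) the shortest-path tree of `G` rooted at `c`,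
oriented away from the root -/
def IsSPTree (len : G.A → ℝ) (d : G.V → G.V → ℝ) (c : G.V) (T : Set G.A) : Prop :=
  (∀ a ∈ T, d c (G.head a) = d c (G.tail a) + len a) ∧
  (∀ a ∈ T, G.rev a ∉ T) ∧
  (∀ w : G.V, w ≠ c → ∃! a, a ∈ T ∧ G.head a = w) ∧
  (∀ a ∈ T, G.head a ≠ c)

/-- the number of edges on the path between two dual vertices in the cotree of `T`
(the spanning tree of the dual formed by the duals of the edges not in `T`) -/
noncomputable def cotreeDist (T : Set G.A) (φ ψ : G.F) : ℕ :=
  sInf {n : ℕ | ∃ p : List G.A,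
    G.IsDualWalk {a : G.A | a ∉ T ∧ G.rev a ∉ T} p φ ψ ∧ p.length = n}

/-- the dart scanned after `a` in a counterclockwise-first depth-first traversal of the
spanning tree `T`: tree darts are traversed and the scan resumes counterclockwise after the
reverse dart; non-tree darts are skipped -/
noncomputable def dfsNext (T : Set G.A) (a : G.A) : G.A :=
  if a ∈ T ∨ G.rev a ∈ T then G.rot (G.rev a) else G.rot a

/-- `pre` is the preorder labeling of all arcs of `G` (equivalently, of the artificial
leaves `x_{uv}` attached immediately before each arc `uv`) induced by a
counterclockwise-first depth-first search of the tree `T` rooted at `c`,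
started from the dart `a₀` -/
def IsCCWPreorder (T : Set G.A) (c : G.V) (a₀ : G.A) (pre : G.A → ℕ) : Prop :=
  G.tail a₀ = c ∧ pre a₀ = 0 ∧ Function.Injective pre ∧
  (∀ a : G.A, pre a < Fintype.card G.A) ∧
  ∀ a : G.A, (G.dfsNext T)^[pre a] a₀ = a

/-- the successor of an arc in the boundary walk of the face to its left -/
def faceNext (a : G.A) : G.A := G.rot (G.rev a)

/-- the number of face-walk steps from the arc `a` to the arc `b` (both on the boundary of
the same face), i.e. the position of `b` in the boundary walk of the face starting at `a` -/
noncomputable def faceIdx (a b : G.A) : ℕ :=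
  if h : ∃ k : ℕ, (G.faceNext)^[k] a = b then Nat.find h else 0

/-- the sets of vertices `S` and `S'` are separated along the boundary of the face `h`:
going around `h` starting from some boundary arc, all occurrences of vertices of `S`
come before all occurrences of vertices of `S'` -/
def SeparatedAlong (h : G.F) (S S' : Set G.V) : Prop :=
  ∃ a₀, G.left a₀ = h ∧ ∃ m : ℕ,
    (∀ b, G.left b = h → G.tail b ∈ S → G.faceIdx a₀ b < m) ∧
    (∀ b, G.left b = h → G.tail b ∈ S' → m ≤ G.faceIdx a₀ b)

/-- the bisector `β*(S₁,S₂)`: duals of arcs whose tail lies in the cell of a site of `S₁`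
and whose head lies in the cell of a site of `S₂`, in the diagram `VD(S₁ ∪ S₂, ω)` -/
def groupBisector (d : G.V → G.V → ℝ) (S₁ S₂ : Set G.V) (ω : G.V → ℝ) : Set G.A :=
  {a : G.A | (∃ s ∈ S₁, G.tail a ∈ G.VorCell d (S₁ ∪ S₂) ω s) ∧
             (∃ s ∈ S₂, G.head a ∈ G.VorCell d (S₁ ∪ S₂) ω s)}

/-- `z` lies strictly between `x` and `y` in the boundary walk of their common face -/
def StrictBetween (x y z : G.A) : Prop :=
  0 < G.faceIdx x z ∧ G.faceIdx x z < G.faceIdx x y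

/-- the closed dual walk enumerated by `f` (cyclically, of length `n`) is non-self-crossing:
at every dual vertex visited more than once, the passages through it do not interleave in
the rotation around that dual vertex -/
def EnumNonSelfCrossing (f : ℕ → G.A) (n : ℕ) : Prop :=
  ∀ i j, i < n → j < n → i ≠ j →
    G.dualHead (f i) = G.dualHead (f j) →
    (G.StrictBetween (G.rev (f i)) (f ((i + 1) % n)) (G.rev (f j)) ↔
     G.StrictBetween (G.rev (f i)) (f ((i + 1) % n)) (f ((j + 1) % n)))

/-- a face of `G` belongs to a set `Vor` of vertices if all its incident vertices do -/
def FaceBelongs (Vor : Set G.V) (f : G.F) : Prop := ∀ w : G.V, G.Incident w f → w ∈ Vor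

/-- the dual arc `a* = f*g*` penetrates `Vor*` at the cycle `C`: the face `f` does not
belong to `Vor`, the face `g` does, and `f*` is a vertex of `C` -/
def PenetratesAt (Vor : Set G.V) (C : Set G.A) (a : G.A) : Prop :=
  ¬ G.FaceBelongs Vor (G.dualTail a) ∧ G.FaceBelongs Vor (G.dualHead a) ∧
  ∃ b ∈ C, G.DualIncident b (G.dualTail a)

/-- the dual arc `a* = f*g*` exits `Vor*` at the cycle `C`: the reversed arc `g*f*`
penetrates at `C` -/
def ExitsAt (Vor : Set G.V) (C : Set G.A) (a : G.A) : Prop :=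
  G.FaceBelongs Vor (G.dualTail a) ∧ ¬ G.FaceBelongs Vor (G.dualHead a) ∧
  ∃ b ∈ C, G.DualIncident b (G.dualHead a)

/-- `K` is a connected component of the complement of the vertex set `Vor` -/
def IsCompOfComplement (Vor K : Set G.V) : Prop :=
  ∃ x, x ∉ Vor ∧ K = {y | Relation.ReflTransGen
    (fun p q => p ∉ Vor ∧ q ∉ Vor ∧ ∃ a : G.A, G.tail a = p ∧ G.head a = q) x y}

/-- the boundary cycle of `Vor*` separating `Vor` from the complement component `K` -/
def boundaryCycle (Vor K : Set G.V) : Set G.A :=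
  {a : G.A | G.tail a ∈ Vor ∧ G.head a ∈ K}

/-- the set `𝒞*` of boundary cycles of `Vor*` -/
def boundaryCycles (Vor : Set G.V) : Set (Set G.A) :=
  {C | ∃ K : Set G.V, G.IsCompOfComplement Vor K ∧ C = G.boundaryCycle Vor K}

/-- `Tstar` is the cotree of the (primal) spanning tree `T`, i.e. the spanning tree of the
dual formed by the duals of the edges of `G` not in `T`, oriented away from `root` -/
def IsCotree (T Tstar : Set G.A) (root : G.F) : Prop :=
  (∀ a ∈ Tstar, a ∉ T ∧ G.rev a ∉ T) ∧
  (∀ a ∈ Tstar, G.rev a ∉ Tstar) ∧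
  (∀ a : G.A, a ∉ T → G.rev a ∉ T → (a ∈ Tstar ∨ G.rev a ∈ Tstar)) ∧
  (∀ φ : G.F, φ ≠ root → ∃! a, a ∈ Tstar ∧ G.dualHead a = φ) ∧
  (∀ a ∈ Tstar, G.dualHead a ≠ root) ∧
  (∀ φ : G.F, ∃ p : List G.A, G.IsDualWalk Tstar p root φ)

end PlanarGraph


namespace PlanarGraph

open Relation VorAux

variable (G : PlanarGraph)

/-! ### basic incidence lemmas -/

lemma left_rot (a : G.A) : G.left (G.rot a) = G.right a := by
  have h := G.left_faceNext (G.rev a)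
  rw [G.rev_rev] at h
  rw [h]; rfl

lemma head_rev (a : G.A) : G.head (G.rev a) = G.tail a := by
  have h := G.tail_rev (G.rev a)
  rw [G.rev_rev] at h
  exact h.symm

lemma right_rev (a : G.A) : G.right (G.rev a) = G.left a := by
  rw [right, G.rev_rev]

lemma incident_tail_left (a : G.A) : G.Incident (G.tail a) (G.left a) := ⟨a, rfl, rfl⟩

lemma incident_head_left (a : G.A) : G.Incident (G.head a) (G.left a) :=
  ⟨G.rot (G.rev a), by rw [G.tail_rot, G.tail_rev], G.left_faceNext a⟩

lemma incident_tail_right (a : G.A) : G.Incident (G.tail a) (G.right a) :=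
  ⟨G.rot a, G.tail_rot a, G.left_rot a⟩

lemma incident_head_right (a : G.A) : G.Incident (G.head a) (G.right a) :=
  ⟨G.rev a, G.tail_rev a, rfl⟩

/-- `rev` as a permutation -/
def revPerm : Equiv.Perm G.A := ⟨G.rev, G.rev, G.rev_rev, G.rev_rev⟩

@[simp] lemma revPerm_apply (a : G.A) : G.revPerm a = G.rev a := rfl

lemma mul_rot_rev_apply (a : G.A) : (G.rot * G.revPerm) a = G.rot (G.rev a) := rfl

/-! ### every vertex is the tail of some arc -/

lemma arc_nonempty : Nonempty G.A := by
  by_contra h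
  have hA : Fintype.card G.A = 0 := by
    rw [Fintype.card_eq_zero_iff]
    exact ⟨fun a => h ⟨a⟩⟩
  have hF : Fintype.card G.F = 0 := by
    rw [Fintype.card_eq_zero_iff]
    refine ⟨fun f => ?_⟩
    obtain ⟨a, _⟩ := G.left_surjective f
    exact h ⟨a⟩
  have heuler := G.euler
  rw [hA, hF] at heuler
  have hV : Fintype.card G.V = 2 := by omega
  have h1 : 1 < Fintype.card G.V := by omega
  obtain ⟨u, w, huw⟩ := Fintype.exists_pair_of_one_lt_card h1
  have hc := G.connected u w
  induction hc using Relation.ReflTransGen.head_induction_on with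
  | refl => exact huw rfl
  | head hstep _ _ =>
    obtain ⟨a, _, _⟩ := hstep
    exact h ⟨a⟩

lemma exists_arc_tail (w : G.V) : ∃ a : G.A, G.tail a = w := by
  obtain ⟨a₀⟩ := G.arc_nonempty
  have hc := G.connected (G.tail a₀) w
  rcases Relation.ReflTransGen.cases_tail hc with h | ⟨c, _, hstep⟩
  · exact ⟨a₀, h.symm⟩
  · obtain ⟨a, _, ha2⟩ := hstep
    exact ⟨G.rev a, by rw [G.tail_rev, ha2]⟩

/-! ### orbit counts of the three permutations -/

lemma eqvGen_rev_iff (a b : G.A) :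
    EqvGen (pstep G.revPerm) a b ↔ b = a ∨ b = G.rev a := by
  constructor
  · intro h
    obtain ⟨n, hn⟩ := eqvGen_pstep_iff.1 h
    have : ∀ m : ℕ, (⇑G.revPerm)^[m] a = a ∨ (⇑G.revPerm)^[m] a = G.rev a := by
      intro m
      induction m with
      | zero => exact Or.inl rfl
      | succ m ih =>
        rw [Function.iterate_succ_apply']
        rcases ih with h1 | h1
        · rw [h1]; exact Or.inr rfl
        · rw [h1]; exact Or.inl (by rw [revPerm_apply, G.rev_rev])
    rcases this n with h1 | h1 <;> rw [hn] at h1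
    · exact Or.inl h1
    · exact Or.inr h1
  · rintro (rfl | rfl)
    · exact EqvGen.refl _
    · exact EqvGen.rel _ _ rfl

lemma card_A_eq_two_mul_orb_rev :
    Fintype.card G.A = 2 * orbCount G.revPerm := by
  classical
  have hbij : Function.Bijective
      (fun p : Quotient (EqvGen.setoid (pstep G.revPerm)) × Bool =>
        if p.2 then p.1.out else G.rev p.1.out) := by
    constructor
    · rintro ⟨q, b⟩ ⟨q', b'⟩ hpq
      have hclass : ∀ z w : G.A, z = w ∨ z = G.rev w →
          (Quotient.mk (EqvGen.setoid (pstep G.revPerm)) z) = Quotient.mk _ w := by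
        rintro z w (rfl | rfl)
        · rfl
        · exact Quotient.sound (EqvGen.symm _ _ (EqvGen.rel _ _ rfl))
      cases b <;> cases b' <;> simp only [if_true, if_false] at hpq
      · -- rev out q = rev out q'
        have h1 : q.out = q'.out := G.rev_rev q.out ▸ (G.rev_rev q'.out ▸ congrArg G.rev hpq)
        have : q = q' := by rw [← Quotient.out_eq q, ← Quotient.out_eq q', h1]
        exact Prod.ext this rfl
      · -- rev out q = out q'
        exfalso
        have : q = q' := by
          rw [← Quotient.out_eq q, ← Quotient.out_eq q']
          exact (hclass q'.out q.out (Or.inr hpq.symm)).symm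
        subst this
        exact G.rev_ne q.out hpq
      · exfalso
        have : q = q' := by
          rw [← Quotient.out_eq q, ← Quotient.out_eq q']
          exact hclass q.out q'.out (Or.inr hpq)
        subst this
        exact G.rev_ne q.out hpq.symm
      · have : q = q' := by rw [← Quotient.out_eq q, ← Quotient.out_eq q', hpq]
        exact Prod.ext this rfl
    · intro a
      have hrel : EqvGen (pstep G.revPerm)
          ((Quotient.mk (EqvGen.setoid (pstep G.revPerm)) a).out) a := by
        have h := Quotient.exact (Quotient.out_eq (Quotient.mk (EqvGen.setoid
          (pstep G.revPerm)) a))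
        exact h
      rcases (G.eqvGen_rev_iff _ a).1 hrel with h1 | h1
      · exact ⟨⟨Quotient.mk _ a, true⟩, by simpa using h1.symm⟩
      · exact ⟨⟨Quotient.mk _ a, false⟩, by simpa using h1.symm⟩
  have h := Nat.card_eq_of_bijective _ hbij
  rw [Nat.card_prod, Nat.card_eq_fintype_card (α := Bool), Nat.card_eq_fintype_card (α := G.A)] at h
  rw [← h, orbCount, relCount]
  simp [Fintype.card_bool, Nat.mul_comm]

lemma orb_faceNext_eq_card_F :
    orbCount (G.rot * G.revPerm) = Fintype.card G.F := by
  have hwd : ∀ x y : G.A, EqvGen (pstep (G.rot * G.revPerm)) x y → G.left x = G.left y := by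
    intro x y h
    induction h with
    | rel u v huv => rw [← huv, mul_rot_rev_apply, G.left_faceNext]
    | refl u => rfl
    | symm u v _ ih => exact ih.symm
    | trans u v w _ _ ih1 ih2 => exact ih1.trans ih2
  have hbij : Function.Bijective
      (Quotient.lift G.left (fun x y h => hwd x y h) :
        Quotient (EqvGen.setoid (pstep (G.rot * G.revPerm))) → G.F) := by
    constructor
    · intro q q'
      induction q using Quotient.ind with
      | _ x =>
      induction q' using Quotient.ind with
      | _ y =>
      intro h
      simp only [Quotient.lift_mk] at h
      obtain ⟨n, hn⟩ := G.face_orbit x y h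
      apply Quotient.sound
      refine eqvGen_pstep_iff.2 ⟨n, ?_⟩
      have hco : ⇑(G.rot * G.revPerm) = (fun z => G.rot (G.rev z)) := funext fun z => rfl
      rw [hco]
      exact hn
    · intro f
      obtain ⟨a, ha⟩ := G.left_surjective f
      exact ⟨Quotient.mk _ a, ha⟩
  have h := Nat.card_eq_of_bijective _ hbij
  rw [Nat.card_eq_fintype_card (α := G.F)] at h
  exact h

/-! ### joint transitivity from the cotree -/

section Cotree

variable (T Tstar : Set G.A) (root : G.F)

lemma jstep_same_face {x y : G.A} (h : G.left x = G.left y) :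
    EqvGen (jstep G.rot G.revPerm) x y := by
  obtain ⟨n, hn⟩ := G.face_orbit x y h
  clear h
  subst hn
  induction n with
  | zero => exact EqvGen.refl _
  | succ n ih =>
    rw [Function.iterate_succ_apply']
    refine EqvGen.trans _ _ _ ih ?_
    exact EqvGen.trans _ _ _ (EqvGen.rel _ _ (Or.inr rfl)) (EqvGen.rel _ _ (Or.inl rfl))

lemma jstep_of_dual_walk :
    ∀ (p : List G.A) (φ ψ : G.F), G.IsDualWalk Tstar p φ ψ →
      ∀ x y : G.A, G.left x = φ → G.left y = ψ → EqvGen (jstep G.rot G.revPerm) x y := by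
  intro p
  induction p with
  | nil =>
    intro φ ψ hw x y hx hy
    exact G.jstep_same_face (by rw [hx, hy]; exact hw)
  | cons a p ih =>
    intro φ ψ hw x y hx hy
    obtain ⟨haT, haTail, hw'⟩ := hw
    have h1 : EqvGen (jstep G.rot G.revPerm) x a :=
      G.jstep_same_face (by rw [hx, ← haTail]; rfl)
    have h2 : EqvGen (jstep G.rot G.revPerm) a (G.rev a) := EqvGen.rel _ _ (Or.inr rfl)
    have h3 : EqvGen (jstep G.rot G.revPerm) (G.rev a) y := by
      refine ih (G.dualHead a) ψ hw' (G.rev a) y ?_ hy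
      rfl
    exact EqvGen.trans _ _ _ (EqvGen.trans _ _ _ h1 h2) h3

lemma jstep_transitive (hTs : G.IsCotree T Tstar root) :
    ∀ x y : G.A, EqvGen (jstep G.rot G.revPerm) x y := by
  intro x y
  have hx := (hTs.2.2.2.2.2) (G.left x)
  have hy := (hTs.2.2.2.2.2) (G.left y)
  obtain ⟨px, hpx⟩ := hx
  obtain ⟨py, hpy⟩ := hy
  obtain ⟨a₀, ha₀⟩ := G.left_surjective root
  have h1 := G.jstep_of_dual_walk Tstar px root (G.left x) hpx a₀ x ha₀ rfl
  have h2 := G.jstep_of_dual_walk Tstar py root (G.left y) hpy a₀ y ha₀ rfl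
  exact EqvGen.trans _ _ _ (EqvGen.symm _ _ h1) h2

/-! ### the fan lemma: arcs with the same tail lie in a single rotation orbit -/

theorem fan_single_orbit (hTs : G.IsCotree T Tstar root) {x y : G.A}
    (hxy : G.tail x = G.tail y) :
    EqvGen (pstep G.rot) x y := by
  have htrans := G.jstep_transitive T Tstar root hTs
  have hbound := genus_bound G.rot G.revPerm htrans
  have hE := G.card_A_eq_two_mul_orb_rev
  have hF := G.orb_faceNext_eq_card_F
  have heuler := G.euler
  -- the tail map on rot-orbits
  have hwd : ∀ z w : G.A, EqvGen (pstep G.rot) z w → G.tail z = G.tail w := by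
    intro z w h
    induction h with
    | rel u v huv => rw [← huv, G.tail_rot]
    | refl u => rfl
    | symm u v _ ih => exact ih.symm
    | trans u v w _ _ ih1 ih2 => exact ih1.trans ih2
  set tmap : Quotient (EqvGen.setoid (pstep G.rot)) → G.V :=
    Quotient.lift G.tail (fun z w h => hwd z w h) with htmap
  have hsurj : Function.Surjective tmap := by
    intro w
    obtain ⟨a, ha⟩ := G.exists_arc_tail w
    exact ⟨Quotient.mk _ a, ha⟩
  have hVle : Fintype.card G.V ≤ orbCount G.rot := by
    rw [← Nat.card_eq_fintype_card]
    exact Nat.card_le_card_of_surjective tmap hsurj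
  have hOrotle : orbCount G.rot ≤ Fintype.card G.V := by omega
  have hbij : Function.Bijective tmap := by
    rw [Nat.bijective_iff_surjective_and_card]
    refine ⟨hsurj, ?_⟩
    rw [Nat.card_eq_fintype_card (α := G.V)]
    have heq : Fintype.card G.V = orbCount G.rot := le_antisymm hVle hOrotle
    exact heq.symm
  have : tmap (Quotient.mk _ x) = tmap (Quotient.mk _ y) := hxy
  have h2 := hbij.1 this
  exact Quotient.exact h2

end Cotree

end PlanarGraph


namespace PlanarGraph

open Relation VorAux

variable (G : PlanarGraph)

/-! ### walk lemmas -/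

lemma isWalk_append {p q : List G.A} {u w z : G.V} (hp : G.IsWalk p u w)
    (hq : G.IsWalk q w z) : G.IsWalk (p ++ q) u z := by
  induction p generalizing u with
  | nil =>
    have : u = w := hp
    subst this
    simpa using hq
  | cons a p ih =>
    obtain ⟨h1, h2⟩ := hp
    exact ⟨h1, ih h2⟩

lemma isWalk_single (a : G.A) : G.IsWalk [a] (G.tail a) (G.head a) := ⟨rfl, rfl⟩

lemma walkLen_append (len : G.A → ℝ) (p q : List G.A) :
    G.walkLen len (p ++ q) = G.walkLen len p + G.walkLen len q := by
  simp [walkLen]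

lemma walkLen_single (len : G.A → ℝ) (a : G.A) : G.walkLen len [a] = len a := by
  simp [walkLen]

lemma dist_triangle_arc {len : G.A → ℝ} {d : G.V → G.V → ℝ} (hd : G.IsSPDist len d)
    (u : G.V) (a : G.A) : d u (G.head a) ≤ d u (G.tail a) + len a := by
  obtain ⟨⟨p, hp, hlen⟩, -⟩ := hd u (G.tail a)
  have hw : G.IsWalk (p ++ [a]) u (G.head a) := G.isWalk_append hp (G.isWalk_single a)
  have h2 := (hd u (G.head a)).2 _ hw
  rw [G.walkLen_append, G.walkLen_single, hlen] at h2
  exact h2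

/-! ### primal tree: parents, descendants -/

/-- the parent arc of a non-root vertex in the tree `T` -/
noncomputable def paArc (T : Set G.A) (w : G.V) : G.A :=
  if h : ∃! a, a ∈ T ∧ G.head a = w then h.exists.choose else Classical.choice G.arc_nonempty

lemma paArc_spec {len : G.A → ℝ} {d : G.V → G.V → ℝ} {c : G.V} {T : Set G.A}
    (hT : G.IsSPTree len d c T) {w : G.V} (hw : w ≠ c) :
    G.paArc T w ∈ T ∧ G.head (G.paArc T w) = w := by
  have h := hT.2.2.1 w hw
  rw [paArc, dif_pos h]
  exact h.exists.choose_spec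

lemma paArc_eq {len : G.A → ℝ} {d : G.V → G.V → ℝ} {c : G.V} {T : Set G.A}
    (hT : G.IsSPTree len d c T) {a : G.A} (ha : a ∈ T) : G.paArc T (G.head a) = a := by
  have hw : G.head a ≠ c := hT.2.2.2 a ha
  have h := hT.2.2.1 (G.head a) hw
  have hspec := G.paArc_spec hT hw
  exact h.unique ⟨hspec.1, hspec.2⟩ ⟨ha, rfl⟩

/-- the down-step relation of the tree: `z` is the parent of `w` -/
def dstep (T : Set G.A) (c : G.V) : G.V → G.V → Prop :=
  fun z w => w ≠ c ∧ G.tail (G.paArc T w) = z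

/-- `u` is an ancestor (or equal) of `z` in `T` -/
def DescV (T : Set G.A) (c : G.V) (u z : G.V) : Prop :=
  Relation.ReflTransGen (G.dstep T c) u z

lemma descV_walk {len : G.A → ℝ} {d : G.V → G.V → ℝ} {c : G.V} {T : Set G.A}
    (hT : G.IsSPTree len d c T) (hd : G.IsSPDist len d) {u z : G.V}
    (h : G.DescV T c u z) :
    ∃ q : List G.A, G.IsWalk q u z ∧ d c u + G.walkLen len q = d c z ∧ (u = z ∨ q ≠ []) := by
  induction h with
  | refl => exact ⟨[], rfl, by simp [walkLen], Or.inl rfl⟩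
  | @tail w₁ w₂ h1 h2 ih =>
    obtain ⟨q, hq, hlen, -⟩ := ih
    obtain ⟨hne, hpa⟩ := h2
    have hspec := G.paArc_spec hT hne
    refine ⟨q ++ [G.paArc T w₂], ?_, ?_, Or.inr (by simp)⟩
    · exact G.isWalk_append hq ⟨hpa, hspec.2⟩
    · rw [G.walkLen_append, G.walkLen_single]
      have hTlen := hT.1 _ hspec.1
      rw [hpa, hspec.2] at hTlen
      linarith

lemma not_descV_parent {len : G.A → ℝ} {d : G.V → G.V → ℝ} {c : G.V} {T : Set G.A}
    (hT : G.IsSPTree len d c T) (hd : G.IsSPDist len d)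
    (hup : G.UniqueShortestPaths len d) {u : G.V} (hu : u ≠ c) :
    ¬ G.DescV T c u (G.tail (G.paArc T u)) := by
  intro hdesc
  obtain ⟨q, hq, hlen, -⟩ := G.descV_walk hT hd hdesc
  have hspec := G.paArc_spec hT hu
  have hTlen := hT.1 _ hspec.1
  rw [hspec.2] at hTlen
  -- walk from u back to u of total length 0
  have hw2 : G.IsWalk (q ++ [G.paArc T u]) u u :=
    G.isWalk_append hq ⟨rfl, hspec.2⟩
  have hlen2 : G.walkLen len (q ++ [G.paArc T u]) = 0 := by
    rw [G.walkLen_append, G.walkLen_single]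
    linarith
  obtain ⟨⟨p, hp, hplen⟩, -⟩ := hd c u
  have hw3 : G.IsWalk (p ++ (q ++ [G.paArc T u])) c u := G.isWalk_append hp hw2
  have hlen3 : G.walkLen len (p ++ (q ++ [G.paArc T u])) = d c u := by
    rw [G.walkLen_append, hplen, hlen2, add_zero]
  have heq := hup c u p (p ++ (q ++ [G.paArc T u])) hp hw3 hplen hlen3
  have : p.length = p.length + (q.length + 1) := by
    conv_lhs => rw [heq]
    simp
  omega

lemma descV_closed_vorCell {len : G.A → ℝ} {d : G.V → G.V → ℝ} {c : G.V} {T : Set G.A}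
    {S : Set G.V} {ω : G.V → ℝ}
    (hT : G.IsSPTree len d c T) (hd : G.IsSPDist len d) {u z : G.V}
    (h : G.DescV T c u z) (hz : z ∈ G.VorCell d S ω c) : u ∈ G.VorCell d S ω c := by
  induction h with
  | refl => exact hz
  | @tail w₁ w₂ h1 h2 ih =>
    apply ih
    obtain ⟨hne, hpa⟩ := h2
    have hspec := G.paArc_spec hT hne
    obtain ⟨hvS, hlt⟩ := hz
    refine ⟨hvS, fun u' hu' hne' => ?_⟩
    have h1' := hlt u' hu' hne'
    have h2' : d c (G.head (G.paArc T w₂)) = d c (G.tail (G.paArc T w₂)) + len (G.paArc T w₂) :=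
      hT.1 _ hspec.1
    have h3' := G.dist_triangle_arc hd u' (G.paArc T w₂)
    rw [hspec.2, hpa] at h2'
    rw [hspec.2, hpa] at h3'
    linarith

/-! ### dual tree: parents, descendants, depth -/

noncomputable def pstarArc (Tstar : Set G.A) (φ : G.F) : G.A :=
  if h : ∃! y, y ∈ Tstar ∧ G.dualHead y = φ then h.exists.choose
  else Classical.choice G.arc_nonempty

noncomputable def parF (Tstar : Set G.A) (root : G.F) (φ : G.F) : G.F :=
  if φ = root then root else G.dualTail (G.pstarArc Tstar φ)

section DualTree

variable {T Tstar : Set G.A} {root : G.F}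

lemma pstarArc_spec (hTs : G.IsCotree T Tstar root) {φ : G.F} (hφ : φ ≠ root) :
    G.pstarArc Tstar φ ∈ Tstar ∧ G.dualHead (G.pstarArc Tstar φ) = φ := by
  have h := hTs.2.2.2.1 φ hφ
  rw [pstarArc, dif_pos h]
  exact h.exists.choose_spec

lemma pstarArc_eq (hTs : G.IsCotree T Tstar root) {y : G.A} (hy : y ∈ Tstar) :
    G.pstarArc Tstar (G.dualHead y) = y := by
  have hφ : G.dualHead y ≠ root := hTs.2.2.2.2.1 y hy
  have h := hTs.2.2.2.1 (G.dualHead y) hφ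
  have hspec := G.pstarArc_spec hTs hφ
  exact h.unique ⟨hspec.1, hspec.2⟩ ⟨hy, rfl⟩

lemma parF_of_arc (hTs : G.IsCotree T Tstar root) {y : G.A} (hy : y ∈ Tstar) :
    G.parF Tstar root (G.dualHead y) = G.dualTail y := by
  have hφ : G.dualHead y ≠ root := hTs.2.2.2.2.1 y hy
  rw [parF, if_neg hφ, G.pstarArc_eq hTs hy]

lemma freach (hTs : G.IsCotree T Tstar root) (φ : G.F) :
    ∃ n : ℕ, (G.parF Tstar root)^[n] φ = root := by
  obtain ⟨p, hp⟩ := hTs.2.2.2.2.2 φ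
  have haux : ∀ (p : List G.A) (χ ψ : G.F), G.IsDualWalk Tstar p χ ψ →
      (∃ n : ℕ, (G.parF Tstar root)^[n] χ = root) →
      ∃ n : ℕ, (G.parF Tstar root)^[n] ψ = root := by
    intro p
    induction p with
    | nil =>
      intro χ ψ hw hn
      have : χ = ψ := hw
      exact this ▸ hn
    | cons a p ih =>
      intro χ ψ hw hn
      obtain ⟨haT, haTail, hw'⟩ := hw
      refine ih (G.dualHead a) ψ hw' ?_
      obtain ⟨n, hn'⟩ := hn
      refine ⟨n + 1, ?_⟩
      rw [Function.iterate_succ_apply, G.parF_of_arc hTs haT, haTail, hn']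
  exact haux p root φ hp ⟨0, rfl⟩

noncomputable def depthF (hTs : G.IsCotree T Tstar root) (φ : G.F) : ℕ :=
  Nat.find (G.freach hTs φ)

lemma depthF_spec (hTs : G.IsCotree T Tstar root) (φ : G.F) :
    (G.parF Tstar root)^[G.depthF hTs φ] φ = root := Nat.find_spec (G.freach hTs φ)

lemma depthF_step (hTs : G.IsCotree T Tstar root) {φ : G.F} (hφ : φ ≠ root) :
    G.depthF hTs φ = G.depthF hTs (G.parF Tstar root φ) + 1 := by
  have hspec := G.depthF_spec hTs φ
  have hne : G.depthF hTs φ ≠ 0 := by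
    intro h0
    rw [h0] at hspec
    exact hφ hspec
  obtain ⟨m, hm⟩ : ∃ m, G.depthF hTs φ = m + 1 := ⟨G.depthF hTs φ - 1, by omega⟩
  rw [hm] at hspec
  rw [Function.iterate_succ_apply] at hspec
  have h1 : G.depthF hTs (G.parF Tstar root φ) ≤ m := Nat.find_le hspec
  have h2 : G.depthF hTs φ ≤ G.depthF hTs (G.parF Tstar root φ) + 1 := by
    apply Nat.find_le
    rw [Function.iterate_succ_apply]
    exact G.depthF_spec hTs (G.parF Tstar root φ)
  omega

/-- the child-step relation in the dual tree -/
def dFstep (Tstar : Set G.A) : G.F → G.F → Prop :=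
  fun φ ψ => ∃ y ∈ Tstar, G.dualTail y = φ ∧ G.dualHead y = ψ

/-- `φ` is an ancestor (or equal) of `ψ` in the dual tree -/
def DescF (Tstar : Set G.A) (φ ψ : G.F) : Prop :=
  Relation.ReflTransGen (G.dFstep Tstar) φ ψ

lemma dFstep_parF (hTs : G.IsCotree T Tstar root) {φ ψ : G.F}
    (h : G.dFstep Tstar φ ψ) : ψ ≠ root ∧ G.parF Tstar root ψ = φ := by
  obtain ⟨y, hy, hy1, hy2⟩ := h
  subst hy2
  exact ⟨hTs.2.2.2.2.1 y hy, by rw [G.parF_of_arc hTs hy, hy1]⟩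

lemma descF_depth_le (hTs : G.IsCotree T Tstar root) {φ ψ : G.F}
    (h : G.DescF Tstar φ ψ) : G.depthF hTs φ ≤ G.depthF hTs ψ := by
  induction h with
  | refl => exact le_rfl
  | tail h1 h2 ih =>
    obtain ⟨hne, hpa⟩ := G.dFstep_parF hTs h2
    have := G.depthF_step hTs hne
    rw [hpa] at this
    omega

lemma descF_root (hTs : G.IsCotree T Tstar root) {ψ : G.F}
    (h : G.DescF Tstar ψ root) : ψ = root := by
  rcases Relation.ReflTransGen.cases_tail h with h1 | ⟨χ, _, hstep⟩
  · exact h1.symm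
  · obtain ⟨y, hy, -, hy2⟩ := hstep
    exact absurd hy2 (hTs.2.2.2.2.1 y hy)

lemma descF_step_iff (hTs : G.IsCotree T Tstar root) {g₀ : G.F} {y : G.A}
    (hy : y ∈ Tstar) (hne : G.dualHead y ≠ g₀) :
    (G.DescF Tstar g₀ (G.dualTail y) ↔ G.DescF Tstar g₀ (G.dualHead y)) := by
  constructor
  · intro h
    exact h.tail ⟨y, hy, rfl, rfl⟩
  · intro h
    rcases Relation.ReflTransGen.cases_tail h with h1 | ⟨χ, hχ, hstep⟩
    · exact absurd h1 hne
    · obtain ⟨y', hy', hy'1, hy'2⟩ := hstep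
      have heq : y' = y := by
        have h1 := G.pstarArc_eq hTs hy'
        have h2 := G.pstarArc_eq hTs hy
        rw [hy'2] at h1
        exact h1.symm.trans h2
      subst heq
      rwa [← hy'1] at hχ

lemma not_descF_dualTail_self (hTs : G.IsCotree T Tstar root) {e : G.A}
    (he : e ∈ Tstar) : ¬ G.DescF Tstar (G.dualHead e) (G.dualTail e) := by
  intro h
  have h1 := G.descF_depth_le hTs h
  have h2 := G.depthF_step hTs (hTs.2.2.2.2.1 e he)
  rw [G.parF_of_arc hTs he] at h2
  omega

end DualTree

end PlanarGraph


namespace PlanarGraph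

open Relation VorAux

variable (G : PlanarGraph)

lemma zmod2_eq_of_add {a b : ZMod 2} (h : a + b = 0) : a = b := by
  have h2 : a = -b := eq_neg_of_add_eq_zero_left h
  simpa [CharTwo.neg_eq] using h2

section Parity

variable (Tstar : Set G.A) (e : G.A)

/-- the side of a face with respect to the cotree arc `e`: `1` if the face is a
descendant of the head of `e` in the cotree -/
noncomputable def sideF (φ : G.F) : ZMod 2 :=
  if G.DescF Tstar (G.dualHead e) φ then 1 else 0

/-- the crossing indicator of an arc: whether its two faces lie on opposite sides -/
noncomputable def crossA (a : G.A) : ZMod 2 :=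
  G.sideF Tstar e (G.left a) + G.sideF Tstar e (G.right a)

variable {T : Set G.A} {root : G.F}

lemma sideF_dualHead : G.sideF Tstar e (G.dualHead e) = 1 :=
  if_pos Relation.ReflTransGen.refl

lemma sideF_root (hTs : G.IsCotree T Tstar root) (he : e ∈ Tstar) :
    G.sideF Tstar e root = 0 := by
  rw [sideF, if_neg]
  intro h
  exact hTs.2.2.2.2.1 e he (G.descF_root hTs h)

lemma sideF_dualTail (hTs : G.IsCotree T Tstar root) (he : e ∈ Tstar) :
    G.sideF Tstar e (G.dualTail e) = 0 :=
  if_neg (G.not_descF_dualTail_self hTs he)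

lemma crossA_rev (a : G.A) : G.crossA Tstar e (G.rev a) = G.crossA Tstar e a := by
  rw [crossA, crossA, G.right_rev]
  have h1 : G.left (G.rev a) = G.right a := rfl
  rw [h1, add_comm]

lemma crossA_cotree (hTs : G.IsCotree T Tstar root) (he : e ∈ Tstar)
    {y : G.A} (hy : y ∈ Tstar) (hne : y ≠ e) : G.crossA Tstar e y = 0 := by
  have hnehead : G.dualHead y ≠ G.dualHead e := by
    intro h
    apply hne
    have h1 := G.pstarArc_eq hTs hy
    have h2 := G.pstarArc_eq hTs he
    rw [h] at h1
    exact h1.symm.trans h2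
  have hiff := G.descF_step_iff hTs hy (g₀ := G.dualHead e) hnehead
  have hside : G.sideF Tstar e (G.left y) = G.sideF Tstar e (G.right y) := by
    rw [sideF, sideF]
    have h1 : G.left y = G.dualTail y := rfl
    have h2 : G.right y = G.dualHead y := rfl
    rw [h1, h2]
    by_cases h : G.DescF Tstar (G.dualHead e) (G.dualTail y)
    · rw [if_pos h, if_pos (hiff.1 h)]
    · rw [if_neg h, if_neg (fun h2 => h (hiff.2 h2))]
  rw [crossA, hside]
  exact CharTwo.add_self_eq_zero _

lemma crossA_e (hTs : G.IsCotree T Tstar root) (he : e ∈ Tstar) :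
    G.crossA Tstar e e = 1 := by
  have h1 : G.left e = G.dualTail e := rfl
  have h2 : G.right e = G.dualHead e := rfl
  rw [crossA, h1, h2, G.sideF_dualTail Tstar e hTs he, G.sideF_dualHead, zero_add]

lemma sum_crossA_tail (w : G.V) :
    ∑ a ∈ Finset.univ.filter (fun a => G.tail a = w), G.crossA Tstar e a = 0 := by
  have hsplit : ∑ a ∈ Finset.univ.filter (fun a => G.tail a = w), G.crossA Tstar e a
      = (∑ a ∈ Finset.univ.filter (fun a => G.tail a = w), G.sideF Tstar e (G.left a))
        + ∑ a ∈ Finset.univ.filter (fun a => G.tail a = w), G.sideF Tstar e (G.right a) := by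
    rw [← Finset.sum_add_distrib]
    rfl
  have hre : ∑ a ∈ Finset.univ.filter (fun a => G.tail a = w), G.sideF Tstar e (G.right a)
      = ∑ a ∈ Finset.univ.filter (fun a => G.tail a = w), G.sideF Tstar e (G.left a) := by
    apply Finset.sum_equiv G.rot
    · intro a
      simp [G.tail_rot]
    · intro a _
      rw [G.left_rot]
  rw [hsplit, hre]
  exact CharTwo.add_self_eq_zero _

/-- key parity lemma: a tree arc whose faces lie on opposite sides of the cotree arc `e`
has its head on the tree path to an endpoint of `e` -/
lemma crossA_tree_arc {len : G.A → ℝ} {d : G.V → G.V → ℝ} {c : G.V}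
    (hT : G.IsSPTree len d c T) (hd : G.IsSPDist len d)
    (hup : G.UniqueShortestPaths len d) (hTs : G.IsCotree T Tstar root)
    (he : e ∈ Tstar) {a : G.A} (haT : a ∈ T)
    (hcross : G.crossA Tstar e a ≠ 0) :
    G.DescV T c (G.head a) (G.tail e) ∨ G.DescV T c (G.head a) (G.head e) := by
  by_contra hcon
  push_neg at hcon
  obtain ⟨hc1, hc2⟩ := hcon
  have hune : G.head a ≠ c := hT.2.2.2 a haT
  have hpau : G.paArc T (G.head a) = a := G.paArc_eq hT haT
  set u := G.head a with hu
  set Sv : Finset G.V := Finset.univ.filter (fun z => G.DescV T c u z) with hSv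
  have hmemS : ∀ z, z ∈ Sv ↔ G.DescV T c u z := by intro z; simp [hSv]
  have huS : u ∈ Sv := (hmemS u).2 Relation.ReflTransGen.refl
  have hSnec : ∀ z ∈ Sv, z ≠ c := by
    intro z hz hzc
    have hd2 := (hmemS z).1 hz
    subst hzc
    rcases Relation.ReflTransGen.cases_tail hd2 with h1 | ⟨y, _, hstep⟩
    · exact hune h1.symm
    · exact hstep.1 rfl
  have hparentS : ∀ z ∈ Sv, z ≠ u → G.tail (G.paArc T z) ∈ Sv := by
    intro z hz hzu
    have hd2 := (hmemS z).1 hz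
    rcases Relation.ReflTransGen.cases_tail hd2 with h1 | ⟨y, hy, hstep⟩
    · exact absurd h1 hzu
    · rw [hstep.2]
      exact (hmemS _).2 hy
  have hchildS : ∀ z, z ≠ c → G.tail (G.paArc T z) ∈ Sv → z ∈ Sv := by
    intro z hzc hpz
    exact (hmemS z).2 (((hmemS _).1 hpz).tail ⟨hzc, rfl⟩)
  have hnotparent : G.tail (G.paArc T u) ∉ Sv := by
    intro h
    exact (G.not_descV_parent hT hd hup hune) ((hmemS _).1 h)
  set B := Finset.univ.filter (fun x => G.tail x ∈ Sv) with hB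
  have htotal : ∑ x ∈ B, G.crossA Tstar e x = 0 := by
    rw [hB, ← Finset.sum_fiberwise_eq_sum_filter Finset.univ Sv G.tail (G.crossA Tstar e)]
    apply Finset.sum_eq_zero
    intro w _
    exact G.sum_crossA_tail Tstar e w
  have hsplit1 := Finset.sum_filter_add_sum_filter_not B (fun x => x ∈ T) (G.crossA Tstar e)
  have hsplit2 := Finset.sum_filter_add_sum_filter_not (B.filter (fun x => ¬ x ∈ T))
      (fun x => G.rev x ∈ T) (G.crossA Tstar e)
  have h3 : ∑ x ∈ (B.filter (fun x => ¬ x ∈ T)).filter (fun x => ¬ G.rev x ∈ T),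
      G.crossA Tstar e x = 0 := by
    apply Finset.sum_eq_zero
    intro x hx
    simp only [Finset.mem_filter, hB, Finset.mem_univ, true_and] at hx
    obtain ⟨⟨hxS, hxT⟩, hxrT⟩ := hx
    have hxe : x ≠ e := by
      intro h
      subst h
      exact hc1 ((hmemS _).1 hxS)
    have hxre : x ≠ G.rev e := by
      intro h
      apply hc2
      have : G.tail x = G.head e := by rw [h, G.tail_rev]
      rw [this] at hxS
      exact (hmemS _).1 hxS
    rcases hTs.2.2.1 x hxT hxrT with h1 | h1
    · exact G.crossA_cotree Tstar e hTs he h1 hxe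
    · rw [← G.crossA_rev]
      refine G.crossA_cotree Tstar e hTs he h1 ?_
      intro h
      apply hxre
      rw [← G.rev_rev x, h]
  have hA1 : ∑ z ∈ Sv.erase u, G.crossA Tstar e (G.paArc T z)
      = ∑ x ∈ B.filter (fun x => x ∈ T), G.crossA Tstar e x := by
    apply Finset.sum_nbij' (i := fun z => G.paArc T z) (j := fun x => G.head x)
    · intro z hz
      rw [Finset.mem_erase] at hz
      have hzc := hSnec z hz.2
      have hspec := G.paArc_spec hT hzc
      simp only [Finset.mem_filter, hB, Finset.mem_univ, true_and]
      exact ⟨hparentS z hz.2 hz.1, hspec.1⟩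
    · intro x hx
      simp only [Finset.mem_filter, hB, Finset.mem_univ, true_and] at hx
      obtain ⟨hxS, hxT⟩ := hx
      rw [Finset.mem_erase]
      constructor
      · intro h
        apply hnotparent
        rw [← h, G.paArc_eq hT hxT]
        exact hxS
      · exact hchildS (G.head x) (hT.2.2.2 x hxT) (by rw [G.paArc_eq hT hxT]; exact hxS)
    · intro z hz
      rw [Finset.mem_erase] at hz
      exact (G.paArc_spec hT (hSnec z hz.2)).2
    · intro x hx
      simp only [Finset.mem_filter, hB, Finset.mem_univ, true_and] at hx
      exact G.paArc_eq hT hx.2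
    · intro z _
      rfl
  have hA2 : ∑ z ∈ Sv, G.crossA Tstar e (G.paArc T z)
      = ∑ x ∈ (B.filter (fun x => ¬ x ∈ T)).filter (fun x => G.rev x ∈ T),
          G.crossA Tstar e x := by
    apply Finset.sum_nbij' (i := fun z => G.rev (G.paArc T z)) (j := fun x => G.tail x)
    · intro z hz
      have hzc := hSnec z hz
      have hspec := G.paArc_spec hT hzc
      simp only [Finset.mem_filter, hB, Finset.mem_univ, true_and]
      refine ⟨⟨?_, ?_⟩, ?_⟩
      · rw [G.tail_rev, hspec.2]
        exact hz
      · exact fun h => hT.2.1 _ hspec.1 h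
      · rw [G.rev_rev]
        exact hspec.1
    · intro x hx
      simp only [Finset.mem_filter, hB, Finset.mem_univ, true_and] at hx
      exact hx.1.1
    · intro z hz
      rw [G.tail_rev]
      exact (G.paArc_spec hT (hSnec z hz)).2
    · intro x hx
      simp only [Finset.mem_filter, hB, Finset.mem_univ, true_and] at hx
      have hpa : G.paArc T (G.tail x) = G.rev x := by
        have h1 := G.paArc_eq hT hx.2
        rw [G.head_rev] at h1
        exact h1
      rw [hpa, G.rev_rev]
    · intro z hz
      rw [G.crossA_rev]
  -- assemble
  have h5 : ∑ x ∈ B.filter (fun x => x ∈ T), G.crossA Tstar e x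
      + ((∑ x ∈ (B.filter (fun x => ¬ x ∈ T)).filter (fun x => G.rev x ∈ T),
          G.crossA Tstar e x)
        + ∑ x ∈ (B.filter (fun x => ¬ x ∈ T)).filter (fun x => ¬ G.rev x ∈ T),
          G.crossA Tstar e x) = 0 := by
    rw [hsplit2, hsplit1]
    exact htotal
  rw [← hA1, ← hA2, h3, add_zero] at h5
  rw [← Finset.sum_erase_add Sv _ huS, ← add_assoc] at h5
  rw [CharTwo.add_self_eq_zero, zero_add] at h5
  rw [hpau] at h5
  exact hcross h5

end Parity

end PlanarGraph


namespace PlanarGraph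

open Relation VorAux

variable (G : PlanarGraph)

lemma tail_eq_of_rot_eqvGen {x y : G.A} (h : EqvGen (pstep G.rot) x y) :
    G.tail x = G.tail y := by
  induction h with
  | rel u v huv => rw [← huv, G.tail_rot]
  | refl u => rfl
  | symm u v _ ih => exact ih.symm
  | trans u v w _ _ ih1 ih2 => exact ih1.trans ih2

section FanTransfer

variable {T Tstar : Set G.A} {root : G.F} (e : G.A)

lemma sideF_fan (hTs : G.IsCotree T Tstar root) {w : G.V}
    (hzero : ∀ z : G.A, G.tail z = w → G.crossA Tstar e z = 0)
    {x y : G.A} (hx : G.tail x = w) (hy : G.tail y = w) :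
    G.sideF Tstar e (G.left x) = G.sideF Tstar e (G.left y) := by
  have hrel := G.fan_single_orbit T Tstar root hTs (x := x) (y := y) (hx.trans hy.symm)
  have haux : ∀ p q : G.A, EqvGen (pstep G.rot) p q → G.tail p = w →
      G.sideF Tstar e (G.left p) = G.sideF Tstar e (G.left q) := by
    intro p q h
    induction h with
    | rel u v huv =>
      intro hw
      have hc : G.sideF Tstar e (G.left u) + G.sideF Tstar e (G.right u) = 0 := hzero u hw
      have h3 := zmod2_eq_of_add hc
      rw [← huv, G.left_rot]
      exact h3
    | refl u => intro _; rfl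
    | symm u v h ih =>
      intro hw
      have htl : G.tail u = G.tail v := G.tail_eq_of_rot_eqvGen h
      exact (ih (htl.trans hw)).symm
    | trans u v z h1 h2 ih1 ih2 =>
      intro hw
      have htl : G.tail u = G.tail v := G.tail_eq_of_rot_eqvGen h1
      exact (ih1 hw).trans (ih2 (htl.symm.trans hw))
  exact haux x y hrel hx

end FanTransfer

/-! ### dual walk lemmas -/

lemma dualWalk_mem {s : Set G.A} : ∀ {p : List G.A} {φ ψ : G.F},
    G.IsDualWalk s p φ ψ → ∀ a ∈ p, a ∈ s := by
  intro p
  induction p with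
  | nil => intro φ ψ _ a ha; exact absurd ha (List.not_mem_nil (a := a))
  | cons b p ih =>
    intro φ ψ hw a ha
    obtain ⟨hb, _, hw'⟩ := hw
    rcases List.mem_cons.1 ha with rfl | ha'
    · exact hb
    · exact ih hw' a ha'

lemma dualWalk_split {s : Set G.A} : ∀ (p q : List G.A) (φ ψ : G.F),
    G.IsDualWalk s (p ++ q) φ ψ → ∃ χ, G.IsDualWalk s p φ χ ∧ G.IsDualWalk s q χ ψ := by
  intro p
  induction p with
  | nil => intro q φ ψ hw; exact ⟨φ, rfl, hw⟩
  | cons a p ih =>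
    intro q φ ψ hw
    obtain ⟨ha, htail, hw'⟩ := hw
    obtain ⟨χ, h1, h2⟩ := ih q (G.dualHead a) ψ hw'
    exact ⟨χ, ⟨ha, htail, h1⟩, h2⟩

lemma dualWalk_descF {Tstar : Set G.A} : ∀ (p : List G.A) (φ ψ : G.F),
    G.IsDualWalk Tstar p φ ψ → G.DescF Tstar φ ψ := by
  intro p
  induction p with
  | nil =>
    intro φ ψ hw
    have : φ = ψ := hw
    exact this ▸ Relation.ReflTransGen.refl
  | cons a p ih =>
    intro φ ψ hw
    obtain ⟨ha, htail, hw'⟩ := hw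
    exact Relation.ReflTransGen.head ⟨a, ha, htail, rfl⟩ (ih (G.dualHead a) ψ hw')

end PlanarGraph

/-- Every root-to-leaf path in the cotree `T*` (rooted at `h∞*`; here any
directed path in `T*` starting at the root) contains at most one arc penetrating `Vor*(v)`
at `C*₀`, and contains no arc exiting `Vor*(v)` at `C*₀`, where `C*₀` is the boundary cycle
of `Vor*(v)` through `h∞*`. -/
theorem cotree_path_penetrates_at_most_once
    (G : PlanarGraph) (len : G.A → ℝ) (d : G.V → G.V → ℝ)
    (hd : G.IsSPDist len d) (hneg : G.NoNegCycle len)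
    (hup : G.UniqueShortestPaths len d) (hgen : G.GenericDistances d)
    (Holes : Set G.F) (S : Set G.V) (ω : G.V → ℝ)
    (hS : ∀ s ∈ S, ∃ h ∈ Holes, G.Incident s h)
    (hpart : ∀ w : G.V, ∃ s ∈ S, w ∈ G.VorCell d S ω s)
    (v : G.V) (hv : v ∈ S)
    (hinf : G.F) (hinfH : hinf ∈ Holes) (hvinf : G.Incident v hinf)
    (Vor : Set G.V) (hVor : Vor = G.VorCell d S ω v)
    (T : Set G.A) (hT : G.IsSPTree len d v T)
    (Tstar : Set G.A) (hTstar : G.IsCotree T Tstar hinf)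
    (C₀ : Set G.A) (hC₀ : C₀ ∈ G.boundaryCycles Vor)
    (hC₀inf : ∃ a ∈ C₀, G.DualIncident a hinf)
    (hC₀uniq : ∀ C ∈ G.boundaryCycles Vor,
      (∃ a ∈ C, G.DualIncident a hinf) → C = C₀) :
    ∀ (φ : G.F) (p : List G.A), G.IsDualWalk Tstar p hinf φ →
      Set.ncard {a : G.A | a ∈ p ∧ G.PenetratesAt Vor C₀ a} ≤ 1 ∧
      ∀ a ∈ p, ¬ G.ExitsAt Vor C₀ a := by
  subst hVor
  obtain ⟨K, hKcomp, hC₀K⟩ := hC₀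
  obtain ⟨xK, hxKnot, hKdef⟩ := hKcomp
  obtain ⟨b₀, hb₀C, hb₀inc⟩ := hC₀inf
  have hKnotVor : ∀ w ∈ K, w ∉ G.VorCell d S ω v := by
    intro w hw
    rw [hKdef] at hw
    rcases Relation.ReflTransGen.cases_tail hw with h1 | ⟨y, _, hstep⟩
    · exact h1 ▸ hxKnot
    · exact hstep.2.1
  have ht₀K : G.head b₀ ∈ K := by
    rw [hC₀K] at hb₀C
    exact hb₀C.2
  have hinct₀ : G.Incident (G.head b₀) hinf := by
    rcases hb₀inc with h | h
    · have h2 := G.incident_head_left b₀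
      rwa [show G.left b₀ = G.dualTail b₀ from rfl, h] at h2
    · have h2 := G.incident_head_right b₀
      rwa [show G.right b₀ = G.dualHead b₀ from rfl, h] at h2
  have hsymm : ∀ p q : G.V, (p ∉ G.VorCell d S ω v ∧ q ∉ G.VorCell d S ω v ∧
        ∃ a : G.A, G.tail a = p ∧ G.head a = q) →
      (q ∉ G.VorCell d S ω v ∧ p ∉ G.VorCell d S ω v ∧
        ∃ a : G.A, G.tail a = q ∧ G.head a = p) := by
    rintro p q ⟨h1, h2, a, ha1, ha2⟩
    exact ⟨h2, h1, G.rev a, by rw [G.tail_rev, ha2], by rw [G.head_rev, ha1]⟩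
  have hrev : ∀ {p q : G.V}, Relation.ReflTransGen (fun p q => p ∉ G.VorCell d S ω v ∧
        q ∉ G.VorCell d S ω v ∧ ∃ a : G.A, G.tail a = p ∧ G.head a = q) p q →
      Relation.ReflTransGen (fun p q => p ∉ G.VorCell d S ω v ∧ q ∉ G.VorCell d S ω v ∧
        ∃ a : G.A, G.tail a = p ∧ G.head a = q) q p := by
    intro p q h
    induction h with
    | refl => exact Relation.ReflTransGen.refl
    | tail h1 h2 ih => exact Relation.ReflTransGen.head (hsymm _ _ h2) ih
  have hconn : ∀ w ∈ K, Relation.ReflTransGen (fun p q => p ∉ G.VorCell d S ω v ∧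
      q ∉ G.VorCell d S ω v ∧ ∃ a : G.A, G.tail a = p ∧ G.head a = q) w (G.head b₀) := by
    intro w hw
    have h1 := hw
    rw [hKdef] at h1
    have h2 := ht₀K
    rw [hKdef] at h2
    exact (hrev h1).trans h2
  -- MAIN LEMMA: faces incident to `K` lie outside the cotree subtree below any
  -- cotree arc whose endpoints are both in the cell of `v`
  have hmain : ∀ eArc : G.A, eArc ∈ Tstar → G.tail eArc ∈ G.VorCell d S ω v →
      G.head eArc ∈ G.VorCell d S ω v →
      ∀ (w : G.V) (ψ : G.F), w ∈ K → G.Incident w ψ → G.sideF Tstar eArc ψ = 0 := by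
    intro eArc heTs hetail hehead w ψ hwK hincψ
    have htreecase : ∀ y : G.A, y ∈ T → G.crossA Tstar eArc y ≠ 0 →
        G.tail y ∈ G.VorCell d S ω v ∧ G.head y ∈ G.VorCell d S ω v := by
      intro y hyT hyc
      have hstep1 : G.DescV T v (G.tail y) (G.head y) :=
        Relation.ReflTransGen.single ⟨hT.2.2.2 y hyT, by rw [G.paArc_eq hT hyT]⟩
      rcases G.crossA_tree_arc Tstar eArc hT hd hup hTstar heTs hyT hyc with h1 | h1
      · have hhead := G.descV_closed_vorCell hT hd h1 hetail
        exact ⟨G.descV_closed_vorCell hT hd hstep1 hhead, hhead⟩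
      · have hhead := G.descV_closed_vorCell hT hd h1 hehead
        exact ⟨G.descV_closed_vorCell hT hd hstep1 hhead, hhead⟩
    have hcross0 : ∀ z : G.A, G.tail z ∉ G.VorCell d S ω v →
        G.crossA Tstar eArc z = 0 := by
      intro z hz
      by_cases hzT : z ∈ T
      · by_contra hc
        exact hz (htreecase z hzT hc).1
      · by_cases hzrT : G.rev z ∈ T
        · by_contra hc
          have hc2 : G.crossA Tstar eArc (G.rev z) ≠ 0 := by rwa [G.crossA_rev]
          have h4 := (htreecase _ hzrT hc2).2
          rw [G.head_rev] at h4
          exact hz h4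
        · have hze : z ≠ eArc := by rintro rfl; exact hz hetail
          have hzre : z ≠ G.rev eArc := by
            rintro rfl
            rw [G.tail_rev] at hz
            exact hz hehead
          rcases hTstar.2.2.1 z hzT hzrT with h1 | h1
          · exact G.crossA_cotree Tstar eArc hTstar heTs h1 hze
          · rw [← G.crossA_rev]
            refine G.crossA_cotree Tstar eArc hTstar heTs h1 ?_
            intro h
            exact hzre (by rw [← G.rev_rev z, h])
    have htransfer : ∀ (w1 w2 : G.V), Relation.ReflTransGen (fun p q =>
          p ∉ G.VorCell d S ω v ∧ q ∉ G.VorCell d S ω v ∧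
          ∃ a : G.A, G.tail a = p ∧ G.head a = q) w1 w2 →
        w1 ∉ G.VorCell d S ω v →
        ∀ ψ1 ψ2, G.Incident w1 ψ1 → G.Incident w2 ψ2 →
          G.sideF Tstar eArc ψ1 = G.sideF Tstar eArc ψ2 := by
      intro w1 w2 h
      induction h with
      | refl =>
        intro hnv ψ1 ψ2 h1 h2
        obtain ⟨x1, hx1t, hx1l⟩ := h1
        obtain ⟨x2, hx2t, hx2l⟩ := h2
        rw [← hx1l, ← hx2l]
        exact G.sideF_fan eArc hTstar
          (fun z hz => hcross0 z (by rw [hz]; exact hnv)) hx1t hx2t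
      | @tail m w2' hm hstep2 ih =>
        intro hnv ψ1 ψ2 hinc1 hinc2
        obtain ⟨hm1, hm2, a, hat, hah⟩ := hstep2
        have hIncm : G.Incident m (G.left a) := by rw [← hat]; exact G.incident_tail_left a
        have hIncw : G.Incident w2' (G.left a) := by rw [← hah]; exact G.incident_head_left a
        have e1 := ih hnv ψ1 (G.left a) hinc1 hIncm
        obtain ⟨x1, hx1t, hx1l⟩ := hIncw
        obtain ⟨x2, hx2t, hx2l⟩ := hinc2
        have e2 : G.sideF Tstar eArc (G.left a) = G.sideF Tstar eArc ψ2 := by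
          rw [← hx1l, ← hx2l]
          exact G.sideF_fan eArc hTstar
            (fun z hz => hcross0 z (by rw [hz]; exact hm2)) hx1t hx2t
        exact e1.trans e2
    have h0 := htransfer w (G.head b₀) (hconn w hwK) (hKnotVor w hwK) ψ hinf hincψ hinct₀
    rw [h0]
    exact G.sideF_root Tstar eArc hTstar heTs
  intro φ p hwalk
  have hnotwo : ∀ (l₁ l₂ : List G.A) (a₁ a₂ : G.A), p = l₁ ++ a₁ :: l₂ → a₂ ∈ l₂ →
      G.PenetratesAt (G.VorCell d S ω v) C₀ a₁ →
      G.PenetratesAt (G.VorCell d S ω v) C₀ a₂ → False := by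
    intro l₁ l₂ a₁ a₂ hpeq ha₂ hp1 hp2
    rw [hpeq] at hwalk
    obtain ⟨χ, hw1, hw2⟩ := G.dualWalk_split l₁ (a₁ :: l₂) hinf φ hwalk
    obtain ⟨ha₁Ts, hχ, hrest⟩ := hw2
    obtain ⟨m₁, m₂, hl₂⟩ := List.append_of_mem ha₂
    rw [hl₂] at hrest
    obtain ⟨χ₂, hwm1, hwm2⟩ := G.dualWalk_split m₁ (a₂ :: m₂) _ φ hrest
    obtain ⟨ha₂Ts, hχ₂, _⟩ := hwm2
    have hg₁ := hp1.2.1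
    have hetail : G.tail a₁ ∈ G.VorCell d S ω v := hg₁ _ (G.incident_tail_right a₁)
    have hehead : G.head a₁ ∈ G.VorCell d S ω v := hg₁ _ (G.incident_head_right a₁)
    have hdesc : G.DescF Tstar (G.dualHead a₁) (G.dualTail a₂) := by
      have hdd := G.dualWalk_descF m₁ _ _ hwm1
      rw [← hχ₂] at hdd
      exact hdd
    have hside1 : G.sideF Tstar a₁ (G.dualTail a₂) = 1 := if_pos hdesc
    obtain ⟨b₂, hb₂C, hb₂inc⟩ := hp2.2.2
    have hb₂K : G.head b₂ ∈ K := by rw [hC₀K] at hb₂C; exact hb₂C.2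
    have hb₂Inc : G.Incident (G.head b₂) (G.dualTail a₂) := by
      rcases hb₂inc with h | h
      · have h2 := G.incident_head_left b₂
        rwa [show G.left b₂ = G.dualTail b₂ from rfl, h] at h2
      · have h2 := G.incident_head_right b₂
        rwa [show G.right b₂ = G.dualHead b₂ from rfl, h] at h2
    have h0 := hmain a₁ ha₁Ts hetail hehead (G.head b₂) (G.dualTail a₂) hb₂K hb₂Inc
    rw [hside1] at h0
    exact one_ne_zero h0
  constructor
  · -- at most one penetrating arc
    have hpair : ∀ a₁ a₂ : G.A, a₁ ∈ p → a₂ ∈ p →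
        G.PenetratesAt (G.VorCell d S ω v) C₀ a₁ →
        G.PenetratesAt (G.VorCell d S ω v) C₀ a₂ → a₁ = a₂ := by
      intro a₁ a₂ h1 h2 hp1 hp2
      by_contra hnee
      obtain ⟨l₁, l₂, hsplit⟩ := List.append_of_mem h1
      have h2' : a₂ ∈ l₁ ∨ a₂ ∈ a₁ :: l₂ := by
        rw [hsplit] at h2
        exact List.mem_append.1 h2
      rcases h2' with h2' | h2'
      · obtain ⟨l₃, l₄, hsplit2⟩ := List.append_of_mem h2'
        refine hnotwo l₃ (l₄ ++ a₁ :: l₂) a₂ a₁ ?_ ?_ hp2 hp1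
        · rw [hsplit, hsplit2]
          simp
        · simp
      · rcases List.mem_cons.1 h2' with h | h
        · exact hnee h.symm
        · exact hnotwo l₁ l₂ a₁ a₂ hsplit h hp1 hp2
    rcases Set.eq_empty_or_nonempty
        {a : G.A | a ∈ p ∧ G.PenetratesAt (G.VorCell d S ω v) C₀ a} with hemp | hne
    · rw [hemp]
      simp
    · obtain ⟨a₀, ha₀⟩ := hne
      have hsub : {a : G.A | a ∈ p ∧ G.PenetratesAt (G.VorCell d S ω v) C₀ a} ⊆ {a₀} := by
        intro a₂ ha₂
        have := hpair a₂ a₀ ha₂.1 ha₀.1 ha₂.2 ha₀.2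
        simp [this]
      calc Set.ncard {a : G.A | a ∈ p ∧ G.PenetratesAt (G.VorCell d S ω v) C₀ a}
          ≤ Set.ncard {a₀} := Set.ncard_le_ncard hsub (Set.finite_singleton a₀)
        _ = 1 := Set.ncard_singleton a₀
  · -- no exits
    intro a hap hexit
    have haTs : a ∈ Tstar := G.dualWalk_mem hwalk a hap
    have hf := hexit.1
    have hetail : G.tail a ∈ G.VorCell d S ω v := hf _ (G.incident_tail_left a)
    have hehead : G.head a ∈ G.VorCell d S ω v := hf _ (G.incident_head_left a)
    obtain ⟨b, hbC, hbinc⟩ := hexit.2.2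
    have hbK : G.head b ∈ K := by rw [hC₀K] at hbC; exact hbC.2
    have hbInc : G.Incident (G.head b) (G.dualHead a) := by
      rcases hbinc with h | h
      · have h2 := G.incident_head_left b
        rwa [show G.left b = G.dualTail b from rfl, h] at h2
      · have h2 := G.incident_head_right b
        rwa [show G.right b = G.dualHead b from rfl, h] at h2
    have hside1 : G.sideF Tstar a (G.dualHead a) = 1 := G.sideF_dualHead Tstar a
    have h0 := hmain a haTs hetail hehead (G.head b) (G.dualHead a) hbK hbInc
    rw [hside1] at h0
    exact one_ne_zero h0
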